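/- arXiv:1811.12031 — 2 statements merged into one kernel-verified Lean document; each statement's English description precedes it below -/
import Mathlib

section
/- Let G be a connected graph on n ≥ 4 vertices with diameter 2 and clique number at most 3. Then: μ₅(G) = (1+√33)/2 if C₅ or S₄⁺ is an induced subgraph of G; μ₅(G) = (3+√17)/2 if neither C₅ nor S₄⁺ is an induced subgraph of G but K₄−e is; and μ₅(G) = 4 otherwise. -/
open Matrix SimpleGraph

/-- `x` is a (unit-normalizable) Pareto eigenvector of `A` associated with `lam`:
`x` is nonzero, entrywise nonnegative, `A x ≥ lam • x` entrywise, and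
`lam = xᵀAx / xᵀx`. -/
def IsParetoEigenpair {n : ℕ} (A : Matrix (Fin n) (Fin n) ℝ) (lam : ℝ) (x : Fin n → ℝ) : Prop :=
  x ≠ 0 ∧ (∀ i, 0 ≤ x i) ∧ (∀ i, lam * x i ≤ A.mulVec x i) ∧
    lam = (x ⬝ᵥ A.mulVec x) / (x ⬝ᵥ x)

/-- `lam` is a Pareto eigenvalue of `A`. -/
def IsParetoEigenvalue {n : ℕ} (A : Matrix (Fin n) (Fin n) ℝ) (lam : ℝ) : Prop :=
  ∃ x, IsParetoEigenpair A lam x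

/-- The distance matrix of a graph on `Fin n`, as a real matrix. -/
noncomputable def distMatrix {n : ℕ} (G : SimpleGraph (Fin n)) : Matrix (Fin n) (Fin n) ℝ :=
  fun i j => (G.dist i j : ℝ)

/-- The set `Π(G)` of distance Pareto eigenvalues of `G`. -/
def distParetoSet {n : ℕ} (G : SimpleGraph (Fin n)) : Set ℝ :=
  {lam | IsParetoEigenvalue (distMatrix G) lam}

/-- `a` is the `k`-th largest element of the (finite) set `S`. -/
def IsKthLargest (S : Set ℝ) (k : ℕ) (a : ℝ) : Prop :=
  a ∈ S ∧ {x ∈ S | a < x}.ncard = k - 1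

/-- `a` is the `k`-th smallest element of the (finite) set `S`. -/
def IsKthSmallest (S : Set ℝ) (k : ℕ) (a : ℝ) : Prop :=
  a ∈ S ∧ {x ∈ S | x < a}.ncard = k - 1

/-- The star graph `S_n` on `n` vertices: vertex `0` is adjacent to all others. -/
def starGraph (n : ℕ) : SimpleGraph (Fin n) where
  Adj i j := i ≠ j ∧ (i.val = 0 ∨ j.val = 0)
  symm := ⟨fun i j h => ⟨h.1.symm, h.2.symm⟩⟩
  loopless := ⟨fun i h => h.1 rfl⟩

/-- The graph `S_n⁺`: the star `S_n` plus one edge between the pendant vertices `1` and `2`. -/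
def starPlusGraph (n : ℕ) : SimpleGraph (Fin n) where
  Adj i j := i ≠ j ∧
    ((i.val = 0 ∨ j.val = 0) ∨ (i.val = 1 ∧ j.val = 2) ∨ (i.val = 2 ∧ j.val = 1))
  symm := ⟨fun i j h => ⟨h.1.symm, by tauto⟩⟩
  loopless := ⟨fun i h => h.1 rfl⟩

/-- The wheel graph `W_n` on `n` vertices: hub `0` joined to the cycle `1 - 2 - ⋯ - (n-1) - 1`. -/
def wheelGraph (n : ℕ) : SimpleGraph (Fin n) where
  Adj i j := i ≠ j ∧ (i.val = 0 ∨ j.val = 0 ∨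
    i.val + 1 = j.val ∨ j.val + 1 = i.val ∨
    (i.val = 1 ∧ j.val = n - 1) ∨ (j.val = 1 ∧ i.val = n - 1))
  symm := ⟨fun i j h => ⟨h.1.symm, by tauto⟩⟩
  loopless := ⟨fun i h => h.1 rfl⟩

/-- `K₄ - e`: the complete graph on 4 vertices minus the edge `{0,1}`. -/
def k4MinusE : SimpleGraph (Fin 4) where
  Adj i j := i ≠ j ∧ ¬((i.val = 0 ∧ j.val = 1) ∨ (i.val = 1 ∧ j.val = 0))
  symm := ⟨fun i j h => ⟨h.1.symm, by tauto⟩⟩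
  loopless := ⟨fun i h => h.1 rfl⟩

/-- `C₃ * C₃`: two triangles `{0,1,2}` and `{0,3,4}` glued at the common vertex `0`. -/
def c3c3Graph : SimpleGraph (Fin 5) where
  Adj i j := i ≠ j ∧ (i.val = 0 ∨ j.val = 0 ∨
    (i.val ≤ 2 ∧ j.val ≤ 2) ∨ (3 ≤ i.val ∧ 3 ≤ j.val))
  symm := ⟨fun i j h => ⟨h.1.symm, by tauto⟩⟩
  loopless := ⟨fun i h => h.1 rfl⟩


section Infra
variable {n : ℕ} {G : SimpleGraph (Fin n)}

-- distance facts
lemma dist_pos_of_ne (hG : G.Connected) {u v : Fin n} (h : u ≠ v) : 0 < G.dist u v :=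
  hG.pos_dist_of_ne h

lemma dist_le_two (hG : G.Connected) (hd : G.diam = 2) (u v : Fin n) : G.dist u v ≤ 2 := by
  have h1 : G.ediam ≠ ⊤ := SimpleGraph.ediam_ne_top_of_diam_ne_zero (by omega)
  have := SimpleGraph.dist_le_diam (G := G) h1 (u := u) (v := v)
  omega

lemma dist_eq_two (hG : G.Connected) (hd : G.diam = 2) {u v : Fin n} (hne : u ≠ v)
    (hna : ¬ G.Adj u v) : G.dist u v = 2 := by
  have h1 := dist_pos_of_ne hG hne
  have h2 := dist_le_two hG hd u v
  have h3 : G.dist u v ≠ 1 := fun h => hna (SimpleGraph.dist_eq_one_iff_adj.mp h)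
  omega

lemma adj_of_dist_eq_one {u v : Fin n} (h : G.dist u v = 1) : G.Adj u v :=
  SimpleGraph.dist_eq_one_iff_adj.mp h

lemma not_adj_of_dist_eq_two {u v : Fin n} (h : G.dist u v = 2) : ¬ G.Adj u v := by
  intro ha
  rw [SimpleGraph.dist_eq_one_iff_adj.mpr ha] at h
  omega

lemma exists_common_of_dist_two (hG : G.Connected) {u v : Fin n} (h : G.dist u v = 2) :
    ∃ a, G.Adj u a ∧ G.Adj a v := by
  obtain ⟨p, hp⟩ := SimpleGraph.exists_walk_of_dist_ne_zero (by omega : G.dist u v ≠ 0)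
  rw [h] at hp
  match p, hp with
  | SimpleGraph.Walk.cons' _ a _ h1 (SimpleGraph.Walk.cons h2 SimpleGraph.Walk.nil), _ =>
    exact ⟨a, h1, h2⟩

end Infra
section Pareto
variable {n : ℕ} {G : SimpleGraph (Fin n)}

lemma distMatrix_nonneg (G : SimpleGraph (Fin n)) (i j : Fin n) : 0 ≤ distMatrix G i j := by
  simp [distMatrix]

lemma distMatrix_diag (G : SimpleGraph (Fin n)) (i : Fin n) : distMatrix G i i = 0 := by
  simp [distMatrix]

lemma distMatrix_comm (G : SimpleGraph (Fin n)) (i j : Fin n) :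
    distMatrix G i j = distMatrix G j i := by
  simp [distMatrix, SimpleGraph.dist_comm]

lemma distMatrix_one_le (hG : G.Connected) {i j : Fin n} (h : i ≠ j) :
    1 ≤ distMatrix G i j := by
  have := hG.pos_dist_of_ne h
  simp only [distMatrix]
  exact_mod_cast this

open Classical in
/-- Support structure of a Pareto eigenpair. -/
lemma exists_support {lam : ℝ} {x : Fin n → ℝ}
    (hp : IsParetoEigenpair (distMatrix G) lam x) :
    ∃ J : Finset (Fin n), J.Nonempty ∧ (∀ i ∈ J, 0 < x i) ∧ (∀ i ∉ J, x i = 0) ∧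
      (∀ i ∈ J, ∑ j ∈ J, distMatrix G i j * x j = lam * x i) := by
  obtain ⟨hx0, hnn, hineq, hray⟩ := hp
  set D := distMatrix G
  refine ⟨Finset.univ.filter (fun i => x i ≠ 0), ?_, ?_, ?_, ?_⟩
  · obtain ⟨i, hi⟩ := Function.ne_iff.mp hx0
    exact ⟨i, by simpa using hi⟩
  · intro i hi
    simp only [Finset.mem_filter] at hi
    exact lt_of_le_of_ne (hnn i) (by simpa using Ne.symm hi.2)
  · intro i hi
    simp only [Finset.mem_filter, Finset.mem_univ, true_and, not_not] at hi
    exact hi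
  -- equality on the support
  have hxx : 0 < x ⬝ᵥ x := by
    obtain ⟨i, hi⟩ := Function.ne_iff.mp hx0
    have hi' : x i ≠ 0 := by simpa using hi
    have : 0 < x i * x i := mul_pos (lt_of_le_of_ne (hnn i) (Ne.symm hi')) (lt_of_le_of_ne (hnn i) (Ne.symm hi'))
    apply Finset.sum_pos' (fun j _ => mul_nonneg (hnn j) (hnn j)) ⟨i, Finset.mem_univ i, this⟩
  have hsum : ∑ i, x i * (D.mulVec x i - lam * x i) = 0 := by
    have : x ⬝ᵥ D.mulVec x - lam * (x ⬝ᵥ x) = 0 := by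
      rw [hray]; field_simp; ring
    calc ∑ i, x i * (D.mulVec x i - lam * x i)
        = x ⬝ᵥ D.mulVec x - lam * (x ⬝ᵥ x) := by
          simp only [dotProduct, Finset.mul_sum, mul_sub, Finset.sum_sub_distrib]
          congr 1
          exact Finset.sum_congr rfl fun i _ => by ring
      _ = 0 := this
  have hterm : ∀ i ∈ Finset.univ, (0:ℝ) ≤ x i * (D.mulVec x i - lam * x i) := by
    intro i _
    exact mul_nonneg (hnn i) (by linarith [hineq i])
  have hzero := (Finset.sum_eq_zero_iff_of_nonneg hterm).mp hsum
  intro i hi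
  simp only [Finset.mem_filter, Finset.mem_univ, true_and] at hi
  have h1 := hzero i (Finset.mem_univ i)
  have hxi : 0 < x i := lt_of_le_of_ne (hnn i) (Ne.symm (by simpa using hi))
  have h2 : D.mulVec x i = lam * x i := by
    rcases mul_eq_zero.mp h1 with h | h
    · exact absurd h (ne_of_gt hxi)
    · linarith
  rw [← h2]
  unfold Matrix.mulVec dotProduct
  rw [← Finset.sum_subset (Finset.subset_univ _)]
  intro j _ hj
  simp only [Finset.mem_filter, Finset.mem_univ, true_and, not_not] at hj
  simp [hj]

/-- Constructor: a nonnegative vector satisfying the eigen equation on a finset support. -/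
lemma mem_distParetoSet_of_finset (J : Finset (Fin n)) (c : Fin n → ℝ)
    (hJ : J.Nonempty) (hpos : ∀ i ∈ J, 0 < c i) {lam : ℝ} (hlam : 0 ≤ lam)
    (heq : ∀ i ∈ J, ∑ j ∈ J, distMatrix G i j * c j = lam * c i) :
    lam ∈ distParetoSet G := by
  classical
  set D := distMatrix G with hD
  set x : Fin n → ℝ := fun i => if i ∈ J then c i else 0 with hx
  have hnn : ∀ i, 0 ≤ x i := by
    intro i; simp only [hx]; split
    · exact le_of_lt (hpos i ‹_›)
    · exact le_refl 0
  have hmv : ∀ i, D.mulVec x i = ∑ j ∈ J, D i j * c j := by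
    intro i
    unfold Matrix.mulVec dotProduct
    rw [← Finset.sum_subset (Finset.subset_univ J)]
    · exact Finset.sum_congr rfl fun j hj => by simp [hx, hj]
    · intro j _ hj; simp [hx, hj]
  refine ⟨x, ?_, hnn, ?_, ?_⟩
  · obtain ⟨i, hi⟩ := hJ
    intro h0
    have : x i = 0 := congrFun h0 i
    rw [hx] at this; simp only [hi, if_pos] at this
    exact absurd this (ne_of_gt (hpos i hi))
  · intro i
    rw [hmv i]
    by_cases hi : i ∈ J
    · rw [heq i hi]
      have : x i = c i := by simp [hx, hi]
      rw [this]
    · have : x i = 0 := by simp [hx, hi]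
      rw [this, mul_zero]
      exact Finset.sum_nonneg fun j hj =>
        mul_nonneg (distMatrix_nonneg G i j) (le_of_lt (hpos j hj))
  · have hS : x ⬝ᵥ x = ∑ i ∈ J, c i * c i := by
      unfold dotProduct
      rw [← Finset.sum_subset (Finset.subset_univ J)]
      · exact Finset.sum_congr rfl fun j hj => by simp [hx, hj]
      · intro j _ hj; simp [hx, hj]
    have hSpos : 0 < x ⬝ᵥ x := by
      rw [hS]
      obtain ⟨i, hi⟩ := hJ
      exact Finset.sum_pos' (fun j hj => mul_nonneg (le_of_lt (hpos j hj)) (le_of_lt (hpos j hj)))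
        ⟨i, hi, mul_pos (hpos i hi) (hpos i hi)⟩
    have hN : x ⬝ᵥ D.mulVec x = lam * (x ⬝ᵥ x) := by
      unfold dotProduct
      rw [Finset.mul_sum]
      apply Finset.sum_congr rfl
      intro i _
      by_cases hi : i ∈ J
      · rw [hmv i, heq i hi]
        have : x i = c i := by simp [hx, hi]
        rw [this]; ring
      · have : x i = 0 := by simp [hx, hi]
        rw [this]; ring
    rw [hN, mul_div_assoc, div_self (ne_of_gt hSpos), mul_one]

end Pareto
section Members
variable {n : ℕ} {G : SimpleGraph (Fin n)} {u v w : Fin n}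

lemma distMatrix_adj (h : G.Adj u v) : distMatrix G u v = 1 := by
  simp [distMatrix, SimpleGraph.dist_eq_one_iff_adj.mpr h]

lemma distMatrix_adj' (h : G.Adj u v) : distMatrix G v u = 1 := distMatrix_adj h.symm

lemma distMatrix_two (h : G.dist u v = 2) : distMatrix G u v = 2 := by
  simp [distMatrix, h]

lemma distMatrix_two' (h : G.dist u v = 2) : distMatrix G v u = 2 := by
  apply distMatrix_two; rwa [SimpleGraph.dist_comm]

lemma ne_of_dist_two (h : G.dist u v = 2) : u ≠ v := by
  intro he; rw [he, SimpleGraph.dist_self] at h; omega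

lemma sqrt3_facts : (Real.sqrt 3) ^ 2 = 3 ∧ 1 < Real.sqrt 3 ∧ Real.sqrt 3 < 1.8 := by
  have h := Real.sq_sqrt (by norm_num : (3:ℝ) ≥ 0)
  have h2 := Real.sqrt_nonneg 3
  refine ⟨h, by nlinarith, by nlinarith⟩

lemma sqrt33_facts : (Real.sqrt 33) ^ 2 = 33 ∧ 5.7 < Real.sqrt 33 ∧ Real.sqrt 33 < 5.75 := by
  have h := Real.sq_sqrt (by norm_num : (33:ℝ) ≥ 0)
  have h2 := Real.sqrt_nonneg 33
  refine ⟨h, by nlinarith, by nlinarith⟩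

lemma sqrt17_facts : (Real.sqrt 17) ^ 2 = 17 ∧ 4.1 < Real.sqrt 17 ∧ Real.sqrt 17 < 4.13 := by
  have h := Real.sq_sqrt (by norm_num : (17:ℝ) ≥ 0)
  have h2 := Real.sqrt_nonneg 17
  refine ⟨h, by nlinarith, by nlinarith⟩

lemma zero_mem (hn : 1 ≤ n) : (0:ℝ) ∈ distParetoSet G := by
  have i : Fin n := ⟨0, by omega⟩
  apply mem_distParetoSet_of_finset {i} (fun _ => 1) ⟨i, Finset.mem_singleton_self i⟩
    (fun _ _ => one_pos) le_rfl
  intro j hj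
  rw [Finset.mem_singleton] at hj
  subst hj
  simp [distMatrix_diag]

lemma one_mem (h : G.Adj u v) : (1:ℝ) ∈ distParetoSet G := by
  have hne : u ≠ v := h.ne
  apply mem_distParetoSet_of_finset {u, v} (fun _ => 1) ⟨u, by simp⟩
    (fun _ _ => one_pos) (by norm_num)
  intro i hi
  have hs : ∑ j ∈ ({u, v} : Finset (Fin n)), distMatrix G i j * 1 =
      distMatrix G i u + distMatrix G i v := by
    rw [Finset.sum_insert (by simp [hne]), Finset.sum_singleton]; ring
  rw [hs]
  rcases Finset.mem_insert.mp hi with rfl | hi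
  · rw [distMatrix_diag, distMatrix_adj h]; ring
  · rw [Finset.mem_singleton] at hi; subst hi
    rw [distMatrix_diag, distMatrix_adj' h]; ring

lemma two_mem (h : G.dist u v = 2) : (2:ℝ) ∈ distParetoSet G := by
  have hne : u ≠ v := ne_of_dist_two h
  apply mem_distParetoSet_of_finset {u, v} (fun _ => 1) ⟨u, by simp⟩
    (fun _ _ => one_pos) (by norm_num)
  intro i hi
  have hs : ∑ j ∈ ({u, v} : Finset (Fin n)), distMatrix G i j * 1 =
      distMatrix G i u + distMatrix G i v := by
    rw [Finset.sum_insert (by simp [hne]), Finset.sum_singleton]; ring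
  rw [hs]
  rcases Finset.mem_insert.mp hi with rfl | hi
  · rw [distMatrix_diag, distMatrix_two h]; ring
  · rw [Finset.mem_singleton] at hi; subst hi
    rw [distMatrix_diag, distMatrix_two' h]; ring

/-- membership of 1+√3 from an induced path u - a - w with dist u w = 2 -/
lemma sqrt3_mem {a : Fin n} (h1 : G.Adj u a) (h2 : G.Adj a w) (h3 : G.dist u w = 2) :
    1 + Real.sqrt 3 ∈ distParetoSet G := by
  obtain ⟨hs2, hlb, hub⟩ := sqrt3_facts
  set L : ℝ := 1 + Real.sqrt 3 with hL
  have hLpos : 0 < L := by rw [hL]; nlinarith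
  have hLq : L ^ 2 = 2 * L + 2 := by rw [hL]; nlinarith
  have huw : u ≠ w := ne_of_dist_two h3
  have hua : u ≠ a := h1.ne
  have haw : a ≠ w := h2.ne
  set c : Fin n → ℝ := fun i => if i = a then 2 / L else 1 with hc
  apply mem_distParetoSet_of_finset {u, a, w} c ⟨u, by simp⟩
  · intro i _
    rw [hc]; dsimp only; split
    · positivity
    · exact one_pos
  · positivity
  · intro i hi
    have hs : ∑ j ∈ ({u, a, w} : Finset (Fin n)), distMatrix G i j * c j =
        distMatrix G i u * c u + distMatrix G i a * c a + distMatrix G i w * c w := by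
      rw [Finset.sum_insert (by simp [hua, huw]), Finset.sum_insert (by simp [haw]),
        Finset.sum_singleton]; ring
    rw [hs]
    have hcu : c u = 1 := by rw [hc]; simp [hua]
    have hca : c a = 2 / L := by rw [hc]; simp
    have hcw : c w = 1 := by rw [hc]; simp [Ne.symm haw]
    simp only [Finset.mem_insert, Finset.mem_singleton] at hi
    rcases hi with rfl | rfl | rfl
    · rw [distMatrix_diag, distMatrix_adj h1, distMatrix_two h3, hcu, hca, hcw]
      field_simp
      nlinarith
    · rw [distMatrix_diag, distMatrix_adj' h1, distMatrix_adj h2, hcu, hca, hcw]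
      field_simp
      nlinarith
    · rw [distMatrix_diag, distMatrix_two' h3, distMatrix_adj' h2, hcu, hca, hcw]
      field_simp
      nlinarith

/-- membership of (1+√33)/2 from a (1,2,2) triple: edge v~w, u at distance 2 from both -/
lemma sqrt33_mem (hvw : G.Adj v w) (h1 : G.dist u v = 2) (h2 : G.dist u w = 2) :
    (1 + Real.sqrt 33) / 2 ∈ distParetoSet G := by
  obtain ⟨hs2, hlb, hub⟩ := sqrt33_facts
  set L : ℝ := (1 + Real.sqrt 33) / 2 with hL
  have hLpos : 0 < L := by rw [hL]; nlinarith
  have hLq : L ^ 2 = L + 8 := by rw [hL]; nlinarith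
  have huv : u ≠ v := ne_of_dist_two h1
  have huw : u ≠ w := ne_of_dist_two h2
  have hvw' : v ≠ w := hvw.ne
  set c : Fin n → ℝ := fun i => if i = u then 4 / L else 1 with hc
  apply mem_distParetoSet_of_finset {u, v, w} c ⟨u, by simp⟩
  · intro i _
    rw [hc]; dsimp only; split
    · positivity
    · exact one_pos
  · positivity
  · intro i hi
    have hs : ∑ j ∈ ({u, v, w} : Finset (Fin n)), distMatrix G i j * c j =
        distMatrix G i u * c u + distMatrix G i v * c v + distMatrix G i w * c w := by
      rw [Finset.sum_insert (by simp [huv, huw]), Finset.sum_insert (by simp [hvw']),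
        Finset.sum_singleton]; ring
    rw [hs]
    have hcu : c u = 4 / L := by rw [hc]; simp
    have hcv : c v = 1 := by rw [hc]; simp [Ne.symm huv]
    have hcw : c w = 1 := by rw [hc]; simp [Ne.symm huw]
    simp only [Finset.mem_insert, Finset.mem_singleton] at hi
    rcases hi with rfl | rfl | rfl
    · rw [distMatrix_diag, distMatrix_two h1, distMatrix_two h2, hcu, hcv, hcw]
      field_simp
      ring
    · rw [distMatrix_diag, distMatrix_two' h1, distMatrix_adj hvw, hcu, hcv, hcw]
      field_simp
      nlinarith
    · rw [distMatrix_diag, distMatrix_two' h2, distMatrix_adj' hvw, hcu, hcv, hcw]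
      field_simp
      nlinarith

/-- membership of (3+√17)/2 from a K4-e pattern -/
lemma sqrt17_mem {p q r : Fin n} (hpq : G.dist p q = 2)
    (h1 : G.Adj p r) (h2 : G.Adj p u) (h3 : G.Adj q r) (h4 : G.Adj q u) (h5 : G.Adj r u) :
    (3 + Real.sqrt 17) / 2 ∈ distParetoSet G := by
  obtain ⟨hs2, hlb, hub⟩ := sqrt17_facts
  set L : ℝ := (3 + Real.sqrt 17) / 2 with hL
  have hLpos : 0 < L := by rw [hL]; nlinarith
  have hLq : L ^ 2 = 3 * L + 2 := by rw [hL]; nlinarith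
  have hpq' : p ≠ q := ne_of_dist_two hpq
  have hpr : p ≠ r := h1.ne
  have hpu : p ≠ u := h2.ne
  have hqr : q ≠ r := h3.ne
  have hqu : q ≠ u := h4.ne
  have hru : r ≠ u := h5.ne
  set c : Fin n → ℝ := fun i => if i = p ∨ i = q then (L - 1) / 2 else 1 with hc
  have hLm1 : 0 < (L - 1) / 2 := by rw [hL]; nlinarith
  apply mem_distParetoSet_of_finset {p, q, r, u} c ⟨p, by simp⟩
  · intro i _
    rw [hc]; dsimp only; split
    · exact hLm1
    · exact one_pos
  · positivity
  · intro i hi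
    have hs : ∑ j ∈ ({p, q, r, u} : Finset (Fin n)), distMatrix G i j * c j =
        distMatrix G i p * c p + distMatrix G i q * c q + distMatrix G i r * c r
          + distMatrix G i u * c u := by
      rw [Finset.sum_insert (by simp [hpq', hpr, hpu]), Finset.sum_insert (by simp [hqr, hqu]),
        Finset.sum_insert (by simp [hru]), Finset.sum_singleton]; ring
    rw [hs]
    have hcp : c p = (L - 1) / 2 := by rw [hc]; simp
    have hcq : c q = (L - 1) / 2 := by rw [hc]; simp
    have hcr : c r = 1 := by rw [hc]; simp [Ne.symm hpr, Ne.symm hqr]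
    have hcu : c u = 1 := by rw [hc]; simp [Ne.symm hpu, Ne.symm hqu]
    simp only [Finset.mem_insert, Finset.mem_singleton] at hi
    rcases hi with rfl | rfl | rfl | rfl
    · rw [distMatrix_diag, distMatrix_two hpq, distMatrix_adj h1, distMatrix_adj h2,
        hcp, hcq, hcr, hcu]
      nlinarith
    · rw [distMatrix_diag, distMatrix_two' hpq, distMatrix_adj h3, distMatrix_adj h4,
        hcp, hcq, hcr, hcu]
      nlinarith
    · rw [distMatrix_diag, distMatrix_adj' h1, distMatrix_adj' h3, distMatrix_adj h5,
        hcp, hcq, hcr, hcu]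
      nlinarith
    · rw [distMatrix_diag, distMatrix_adj' h2, distMatrix_adj' h4, distMatrix_adj' h5,
        hcp, hcq, hcr, hcu]
      nlinarith

/-- membership of 4 from an independent triple -/
lemma four_mem_triple (h1 : G.dist u v = 2) (h2 : G.dist u w = 2)
    (h3 : G.dist v w = 2) : (4:ℝ) ∈ distParetoSet G := by
  have huv : u ≠ v := ne_of_dist_two h1
  have huw : u ≠ w := ne_of_dist_two h2
  have hvw : v ≠ w := ne_of_dist_two h3
  apply mem_distParetoSet_of_finset {u, v, w} (fun _ => 1) ⟨u, by simp⟩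
    (fun _ _ => one_pos) (by norm_num)
  intro i hi
  have hs : ∑ j ∈ ({u, v, w} : Finset (Fin n)), distMatrix G i j * 1 =
      distMatrix G i u + distMatrix G i v + distMatrix G i w := by
    rw [Finset.sum_insert (by simp [huv, huw]), Finset.sum_insert (by simp [hvw]),
      Finset.sum_singleton]; ring
  rw [hs]
  simp only [Finset.mem_insert, Finset.mem_singleton] at hi
  rcases hi with rfl | rfl | rfl
  · rw [distMatrix_diag, distMatrix_two h1, distMatrix_two h2]; ring
  · rw [distMatrix_diag, distMatrix_two' h1, distMatrix_two h3]; ring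
  · rw [distMatrix_diag, distMatrix_two' h2, distMatrix_two' h3]; ring

/-- membership of 4 from a C4 distance pattern -/
lemma four_mem_c4 {p q r : Fin n} (hpq : G.dist p q = 2) (hru : G.dist r u = 2)
    (h1 : G.Adj p r) (h2 : G.Adj p u) (h3 : G.Adj q r) (h4 : G.Adj q u) :
    (4:ℝ) ∈ distParetoSet G := by
  have hpq' : p ≠ q := ne_of_dist_two hpq
  have hru' : r ≠ u := ne_of_dist_two hru
  have hpr : p ≠ r := h1.ne
  have hpu : p ≠ u := h2.ne
  have hqr : q ≠ r := h3.ne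
  have hqu : q ≠ u := h4.ne
  apply mem_distParetoSet_of_finset {p, q, r, u} (fun _ => 1) ⟨p, by simp⟩
    (fun _ _ => one_pos) (by norm_num)
  intro i hi
  have hs : ∑ j ∈ ({p, q, r, u} : Finset (Fin n)), distMatrix G i j * 1 =
      distMatrix G i p + distMatrix G i q + distMatrix G i r + distMatrix G i u := by
    rw [Finset.sum_insert (by simp [hpq', hpr, hpu]), Finset.sum_insert (by simp [hqr, hqu]),
      Finset.sum_insert (by simp [hru']), Finset.sum_singleton]; ring
  rw [hs]
  simp only [Finset.mem_insert, Finset.mem_singleton] at hi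
  rcases hi with rfl | rfl | rfl | rfl
  · rw [distMatrix_diag, distMatrix_two hpq, distMatrix_adj h1, distMatrix_adj h2]; ring
  · rw [distMatrix_diag, distMatrix_two' hpq, distMatrix_adj h3, distMatrix_adj h4]; ring
  · rw [distMatrix_diag, distMatrix_adj' h1, distMatrix_adj' h3, distMatrix_two hru]; ring
  · rw [distMatrix_diag, distMatrix_adj' h2, distMatrix_adj' h4, distMatrix_two' hru]; ring

end Members
section Emb
variable {n : ℕ} {G : SimpleGraph (Fin n)} {p q r u : Fin n}

lemma embK4e (hpq : ¬G.Adj p q) (hpq' : p ≠ q) (h1 : G.Adj p r) (h2 : G.Adj p u)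
    (h3 : G.Adj q r) (h4 : G.Adj q u) (h5 : G.Adj r u) : Nonempty (k4MinusE ↪g G) := by
  have h1' := h1.symm; have h2' := h2.symm; have h3' := h3.symm
  have h4' := h4.symm; have h5' := h5.symm
  have hqp : ¬G.Adj q p := fun h => hpq h.symm
  have e1 : p ≠ r := h1.ne
  have e2 : p ≠ u := h2.ne
  have e3 : q ≠ r := h3.ne
  have e4 : q ≠ u := h4.ne
  have e5 : r ≠ u := h5.ne
  have e1' := e1.symm; have e2' := e2.symm; have e3' := e3.symm
  have e4' := e4.symm; have e5' := e5.symm; have hpq'' := hpq'.symm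
  refine ⟨⟨⟨![p, q, r, u], ?_⟩, ?_⟩⟩
  · intro a b hab
    fin_cases a <;> fin_cases b <;> simp_all
  · intro a b
    show G.Adj (![p, q, r, u] a) (![p, q, r, u] b) ↔ k4MinusE.Adj a b
    fin_cases a <;> fin_cases b <;>
      simp only [Matrix.cons_val_zero, Matrix.cons_val_one, Matrix.head_cons,
        Matrix.cons_val_two, Matrix.tail_cons, Matrix.cons_val_three] <;>
      first
        | exact iff_of_false G.irrefl (fun h => (show _ ∧ _ from h).1 rfl)
        | exact iff_of_true (by assumption) ⟨by decide, by decide⟩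
        | exact iff_of_false (by assumption) (fun h => (show _ ∧ _ from h).2 (by decide))

end Emb
section Classify
variable {n : ℕ} {G : SimpleGraph (Fin n)} {lam : ℝ} {x : Fin n → ℝ} {J : Finset (Fin n)}

/-- distance between distinct vertices is 1 or 2 -/
lemma dist_one_or_two (hG : G.Connected) (hd : G.diam = 2) {u v : Fin n} (h : u ≠ v) :
    G.dist u v = 1 ∨ G.dist u v = 2 := by
  have h1 := dist_pos_of_ne hG h
  have h2 := dist_le_two hG hd u v
  omega

lemma base_ineq (hG : G.Connected)
    (heq : ∀ i ∈ J, ∑ j ∈ J, distMatrix G i j * x j = lam * x i)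
    (hpos : ∀ i ∈ J, 0 < x i) {i : Fin n} (hi : i ∈ J) :
    (∑ j ∈ J, x j) - x i ≤ lam * x i := by
  have hb : ∀ j ∈ J, x j - (if j = i then x j else 0) ≤ distMatrix G i j * x j := by
    intro j hj
    by_cases hji : j = i
    · subst hji; simp [distMatrix_diag]
    · rw [if_neg hji]
      simp only [sub_zero]
      calc x j = 1 * x j := (one_mul _).symm
        _ ≤ distMatrix G i j * x j :=
          mul_le_mul_of_nonneg_right (distMatrix_one_le hG (fun h => hji h.symm))
            (le_of_lt (hpos j hj))
  have hs := Finset.sum_le_sum hb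
  rw [Finset.sum_sub_distrib, Finset.sum_ite_eq' J i (fun j => x j), if_pos hi, heq i hi] at hs
  exact hs

lemma pair_ineq (hG : G.Connected)
    (heq : ∀ i ∈ J, ∑ j ∈ J, distMatrix G i j * x j = lam * x i)
    (hpos : ∀ i ∈ J, 0 < x i) {p q : Fin n} (hp : p ∈ J) (hq : q ∈ J) (hne : p ≠ q)
    (hd2 : G.dist p q = 2) :
    (∑ j ∈ J, x j) - x p + x q ≤ lam * x p := by
  have hb : ∀ j ∈ J, x j - (if j = p then x j else 0) + (if j = q then x j else 0)
      ≤ distMatrix G p j * x j := by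
    intro j hj
    by_cases hjp : j = p
    · subst hjp; rw [if_pos rfl, if_neg hne]; simp [distMatrix_diag]
    · rw [if_neg hjp]
      by_cases hjq : j = q
      · subst hjq
        rw [if_pos rfl, distMatrix_two hd2]
        simp only [sub_zero]
        linarith [hpos j hj]
      · rw [if_neg hjq]
        simp only [sub_zero, add_zero]
        calc x j = 1 * x j := (one_mul _).symm
          _ ≤ distMatrix G p j * x j :=
            mul_le_mul_of_nonneg_right (distMatrix_one_le hG (fun h => hjp h.symm))
              (le_of_lt (hpos j hj))
  have hs := Finset.sum_le_sum hb
  rw [Finset.sum_add_distrib, Finset.sum_sub_distrib, Finset.sum_ite_eq' J p (fun j => x j),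
    Finset.sum_ite_eq' J q (fun j => x j), if_pos hp, if_pos hq, heq p hp] at hs
  exact hs

lemma triple_ineq (hG : G.Connected)
    (heq : ∀ i ∈ J, ∑ j ∈ J, distMatrix G i j * x j = lam * x i)
    (hpos : ∀ i ∈ J, 0 < x i) {a b c : Fin n} (ha : a ∈ J) (hb : b ∈ J) (hc : c ∈ J)
    (hab : a ≠ b) (hac : a ≠ c) (hbc : b ≠ c)
    (hd1 : G.dist a b = 2) (hd2 : G.dist a c = 2) :
    (∑ j ∈ J, x j) - x a + x b + x c ≤ lam * x a := by
  have hbnd : ∀ j ∈ J, x j - (if j = a then x j else 0) + (if j = b then x j else 0)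
      + (if j = c then x j else 0) ≤ distMatrix G a j * x j := by
    intro j hj
    by_cases hja : j = a
    · subst hja; rw [if_pos rfl, if_neg hab, if_neg hac]; simp [distMatrix_diag]
    · rw [if_neg hja]
      by_cases hjb : j = b
      · subst hjb
        rw [if_pos rfl, if_neg hbc, distMatrix_two hd1]
        simp only [sub_zero, add_zero]
        linarith [hpos j hj]
      · rw [if_neg hjb]
        by_cases hjc : j = c
        · subst hjc
          rw [if_pos rfl, distMatrix_two hd2]
          simp only [sub_zero, add_zero]
          linarith [hpos j hj]
        · rw [if_neg hjc]
          simp only [sub_zero, add_zero]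
          calc x j = 1 * x j := (one_mul _).symm
            _ ≤ distMatrix G a j * x j :=
              mul_le_mul_of_nonneg_right (distMatrix_one_le hG (fun h => hja h.symm))
                (le_of_lt (hpos j hj))
  have hs := Finset.sum_le_sum hbnd
  rw [Finset.sum_add_distrib, Finset.sum_add_distrib, Finset.sum_sub_distrib,
    Finset.sum_ite_eq' J a (fun j => x j), Finset.sum_ite_eq' J b (fun j => x j),
    Finset.sum_ite_eq' J c (fun j => x j), if_pos ha, if_pos hb, if_pos hc, heq a ha] at hs
  exact hs

/-- 4 or more distinct vertices in a graph with clique number ≤ 3 contain a distance-2 pair -/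
lemma exists_dist_two_pair (hG : G.Connected) (hd : G.diam = 2) (hclique : G.cliqueNum ≤ 3)
    (h4 : 4 ≤ J.card) : ∃ p ∈ J, ∃ q ∈ J, p ≠ q ∧ G.dist p q = 2 := by
  by_contra hcon
  push_neg at hcon
  have hcl : G.IsClique (J : Set (Fin n)) := by
    intro p hp q hq hne
    rcases dist_one_or_two hG hd hne with h | h
    · exact adj_of_dist_eq_one h
    · exact absurd h (hcon p hp q hq hne)
  have := IsClique.card_le_cliqueNum (t := J) (tc := hcl)
  omega

end Classify
section CardCases
variable {n : ℕ} {G : SimpleGraph (Fin n)} {lam : ℝ} {x : Fin n → ℝ} {J : Finset (Fin n)}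

lemma support_card_one
    (heq : ∀ i ∈ J, ∑ j ∈ J, distMatrix G i j * x j = lam * x i)
    (hpos : ∀ i ∈ J, 0 < x i) (h1 : J.card = 1) : lam = 0 := by
  obtain ⟨i, rfl⟩ := Finset.card_eq_one.mp h1
  have h := heq i (Finset.mem_singleton_self i)
  rw [Finset.sum_singleton, distMatrix_diag] at h
  have := hpos i (Finset.mem_singleton_self i)
  have := h.symm
  nlinarith

lemma support_card_two (hG : G.Connected) (hd : G.diam = 2)
    (heq : ∀ i ∈ J, ∑ j ∈ J, distMatrix G i j * x j = lam * x i)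
    (hpos : ∀ i ∈ J, 0 < x i) (h2 : J.card = 2) : lam = 1 ∨ lam = 2 := by
  obtain ⟨p, q, hne, rfl⟩ := Finset.card_eq_two.mp h2
  have hp : p ∈ ({p, q} : Finset (Fin n)) := by simp
  have hq : q ∈ ({p, q} : Finset (Fin n)) := by simp
  have hxp := hpos p hp
  have hxq := hpos q hq
  have e1 := heq p hp
  have e2 := heq q hq
  rw [Finset.sum_insert (by simp [hne]), Finset.sum_singleton, distMatrix_diag,
    zero_mul, zero_add] at e1
  rw [Finset.sum_insert (by simp [hne]), Finset.sum_singleton, distMatrix_diag,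
    zero_mul, add_zero] at e2
  rw [distMatrix_comm G q p] at e2
  -- e1 : D p q * x q = lam * x p, e2 : D p q * x p = lam * x q
  have hDpos : 1 ≤ distMatrix G p q := distMatrix_one_le hG hne
  have hlam : 0 < lam := by nlinarith
  rcases dist_one_or_two hG hd hne with h | h
  · left
    have hD : distMatrix G p q = 1 := by simp [distMatrix, h]
    rw [hD, one_mul] at e1 e2
    have hkey : (lam - 1) * ((lam + 1) * x p) = 0 := by linear_combination (-lam) * e1 - e2
    rcases mul_eq_zero.mp hkey with h' | h'
    · linarith
    · nlinarith
  · right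
    have hD : distMatrix G p q = 2 := distMatrix_two h
    rw [hD] at e1 e2
    have hkey : (lam - 2) * ((lam + 2) * x p) = 0 := by linear_combination (-lam) * e1 - 2 * e2
    rcases mul_eq_zero.mp hkey with h' | h'
    · linarith
    · nlinarith

set_option maxHeartbeats 1000000 in
lemma support_card_three (hG : G.Connected) (hd : G.diam = 2)
    (heq : ∀ i ∈ J, ∑ j ∈ J, distMatrix G i j * x j = lam * x i)
    (hpos : ∀ i ∈ J, 0 < x i) (h3 : J.card = 3) :
    lam = 2 ∨ lam = 1 + Real.sqrt 3 ∨
      ((∃ u v w, G.Adj v w ∧ G.dist u v = 2 ∧ G.dist u w = 2) ∧ lam = (1 + Real.sqrt 33) / 2) ∨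
      lam = 4 := by
  obtain ⟨p, q, r, hpq, hpr, hqr, rfl⟩ := Finset.card_eq_three.mp h3
  have hp : p ∈ ({p, q, r} : Finset (Fin n)) := by simp
  have hq : q ∈ ({p, q, r} : Finset (Fin n)) := by simp
  have hr : r ∈ ({p, q, r} : Finset (Fin n)) := by simp
  have hxp := hpos p hp
  have hxq := hpos q hq
  have hxr := hpos r hr
  have e1 := heq p hp
  have e2 := heq q hq
  have e3 := heq r hr
  rw [Finset.sum_insert (by simp [hpq, hpr]), Finset.sum_insert (by simp [hqr]),
    Finset.sum_singleton] at e1 e2 e3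
  rw [distMatrix_diag, zero_mul, zero_add] at e1
  rw [distMatrix_diag, zero_mul, zero_add, distMatrix_comm G q p] at e2
  rw [distMatrix_diag, zero_mul, add_zero, distMatrix_comm G r p, distMatrix_comm G r q] at e3
  -- e1 : C x q + B x r = lam x p ; e2 : C x p + A x r = lam x q ; e3 : B x p + A x q = lam x r
  -- where C = D p q, B = D p r, A = D q r
  set C := distMatrix G p q with hCdef
  set B := distMatrix G p r with hBdef
  set A := distMatrix G q r with hAdef
  have hC1 : 1 ≤ C := distMatrix_one_le hG hpq
  have hB1 : 1 ≤ B := distMatrix_one_le hG hpr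
  have hA1 : 1 ≤ A := distMatrix_one_le hG hqr
  have hlam : 0 < lam := by nlinarith
  have hchar : (lam ^ 3 - (A ^ 2 + B ^ 2 + C ^ 2) * lam - 2 * A * B * C) * x p = 0 := by
    linear_combination (A ^ 2 - lam ^ 2) * e1 - (lam * C + A * B) * e2 - (lam * B + A * C) * e3
  have hxp' : lam ^ 3 - (A ^ 2 + B ^ 2 + C ^ 2) * lam - 2 * A * B * C = 0 := by
    rcases mul_eq_zero.mp hchar with h | h
    · exact h
    · exact absurd h (ne_of_gt hxp)
  -- case on the three distances
  rcases dist_one_or_two hG hd hpq with hc | hc <;>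
  rcases dist_one_or_two hG hd hpr with hb | hb <;>
  rcases dist_one_or_two hG hd hqr with ha | ha
  all_goals (
    first
      | (have hCv : C = 1 := by rw [hCdef]; exact distMatrix_adj (adj_of_dist_eq_one hc))
      | (have hCv : C = 2 := by rw [hCdef]; exact distMatrix_two hc))
  all_goals (
    first
      | (have hBv : B = 1 := by rw [hBdef]; exact distMatrix_adj (adj_of_dist_eq_one hb))
      | (have hBv : B = 2 := by rw [hBdef]; exact distMatrix_two hb))
  all_goals (
    first
      | (have hAv : A = 1 := by rw [hAdef]; exact distMatrix_adj (adj_of_dist_eq_one ha))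
      | (have hAv : A = 2 := by rw [hAdef]; exact distMatrix_two ha))
  all_goals rw [hAv, hBv, hCv] at hxp'
  -- (1,1,1)
  · left
    have hkey : (lam - 2) * (lam + 1) ^ 2 = 0 := by linear_combination hxp'
    rcases mul_eq_zero.mp hkey with h | h
    · linarith
    · exfalso; have := pow_eq_zero_iff (n := 2) (by norm_num) |>.mp h; linarith
  -- (1,1,2) : A = 2, others 1 : pattern (1,1,2)
  · right; left
    obtain ⟨hs2, hlb, _⟩ := sqrt3_facts
    have hkey : (lam + 2) * (lam ^ 2 - 2 * lam - 2) = 0 := by linear_combination hxp'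
    have hq2 : lam ^ 2 = 2 * lam + 2 := by
      rcases mul_eq_zero.mp hkey with h | h
      · linarith
      · linarith
    have hfac : (lam - (1 + Real.sqrt 3)) * (lam - (1 - Real.sqrt 3)) = 0 := by
      linear_combination hq2 - hs2
    rcases mul_eq_zero.mp hfac with h | h
    · linarith
    · exfalso; nlinarith
  -- (1,2,1) : B = 2
  · right; left
    obtain ⟨hs2, hlb, _⟩ := sqrt3_facts
    have hkey : (lam + 2) * (lam ^ 2 - 2 * lam - 2) = 0 := by linear_combination hxp'
    have hq2 : lam ^ 2 = 2 * lam + 2 := by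
      rcases mul_eq_zero.mp hkey with h | h
      · linarith
      · linarith
    have hfac : (lam - (1 + Real.sqrt 3)) * (lam - (1 - Real.sqrt 3)) = 0 := by
      linear_combination hq2 - hs2
    rcases mul_eq_zero.mp hfac with h | h
    · linarith
    · exfalso; nlinarith
  -- C = D p q = 1, B = D p r = 2, A = D q r = 2 : edge {p,q}, r far from both: triple u=r, v=p, w=q
  · right; right; left
    constructor
    · exact ⟨r, p, q, adj_of_dist_eq_one hc, by rwa [SimpleGraph.dist_comm],
        by rwa [SimpleGraph.dist_comm]⟩
    · obtain ⟨hs2, hlb, _⟩ := sqrt33_facts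
      have hkey : (lam + 1) * (lam ^ 2 - lam - 8) = 0 := by linear_combination hxp'
      have hq2 : lam ^ 2 = lam + 8 := by
        rcases mul_eq_zero.mp hkey with h | h
        · linarith
        · linarith
      have hfac : (lam - (1 + Real.sqrt 33) / 2) * (lam - (1 - Real.sqrt 33) / 2) = 0 := by
        linear_combination hq2 - hs2 / 4
      rcases mul_eq_zero.mp hfac with h | h
      · linarith
      · exfalso; nlinarith
  -- (2,1,1) : C = 2
  · right; left
    obtain ⟨hs2, hlb, _⟩ := sqrt3_facts
    have hkey : (lam + 2) * (lam ^ 2 - 2 * lam - 2) = 0 := by linear_combination hxp'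
    have hq2 : lam ^ 2 = 2 * lam + 2 := by
      rcases mul_eq_zero.mp hkey with h | h
      · linarith
      · linarith
    have hfac : (lam - (1 + Real.sqrt 3)) * (lam - (1 - Real.sqrt 3)) = 0 := by
      linear_combination hq2 - hs2
    rcases mul_eq_zero.mp hfac with h | h
    · linarith
    · exfalso; nlinarith
  -- (2,1,2)? C = 2, B = 1, A = 2 : edge {p,r}, q far from p and r : u=q, v=p, w=r
  · right; right; left
    constructor
    · exact ⟨q, p, r, adj_of_dist_eq_one hb, by rwa [SimpleGraph.dist_comm], ha⟩
    · obtain ⟨hs2, hlb, _⟩ := sqrt33_facts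
      have hkey : (lam + 1) * (lam ^ 2 - lam - 8) = 0 := by linear_combination hxp'
      have hq2 : lam ^ 2 = lam + 8 := by
        rcases mul_eq_zero.mp hkey with h | h
        · linarith
        · linarith
      have hfac : (lam - (1 + Real.sqrt 33) / 2) * (lam - (1 - Real.sqrt 33) / 2) = 0 := by
        linear_combination hq2 - hs2 / 4
      rcases mul_eq_zero.mp hfac with h | h
      · linarith
      · exfalso; nlinarith
  -- (2,2,1) : C = 2, B = 2, A = 1 : edge {q,r}, p far from both : u=p, v=q, w=r
  · right; right; left
    constructor
    · exact ⟨p, q, r, adj_of_dist_eq_one ha, hc, hb⟩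
    · obtain ⟨hs2, hlb, _⟩ := sqrt33_facts
      have hkey : (lam + 1) * (lam ^ 2 - lam - 8) = 0 := by linear_combination hxp'
      have hq2 : lam ^ 2 = lam + 8 := by
        rcases mul_eq_zero.mp hkey with h | h
        · linarith
        · linarith
      have hfac : (lam - (1 + Real.sqrt 33) / 2) * (lam - (1 - Real.sqrt 33) / 2) = 0 := by
        linear_combination hq2 - hs2 / 4
      rcases mul_eq_zero.mp hfac with h | h
      · linarith
      · exfalso; nlinarith
  -- (2,2,2)
  · right; right; right
    have hkey : (lam - 4) * (lam + 2) ^ 2 = 0 := by linear_combination hxp'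
    rcases mul_eq_zero.mp hkey with h | h
    · linarith
    · exfalso; have := pow_eq_zero_iff (n := 2) (by norm_num) |>.mp h; linarith

end CardCases
section Ge4
variable {n : ℕ} {G : SimpleGraph (Fin n)} {lam : ℝ} {x : Fin n → ℝ} {J : Finset (Fin n)}

lemma sum_pos_of_mem (hpos : ∀ i ∈ J, 0 < x i) (hne : J.Nonempty) : 0 < ∑ j ∈ J, x j :=
  Finset.sum_pos hpos hne

lemma support_card_ge4 (hG : G.Connected) (hd : G.diam = 2) (hclique : G.cliqueNum ≤ 3)
    (heq : ∀ i ∈ J, ∑ j ∈ J, distMatrix G i j * x j = lam * x i)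
    (hpos : ∀ i ∈ J, 0 < x i) (h4 : 4 ≤ J.card) : (3 + Real.sqrt 17) / 2 ≤ lam := by
  obtain ⟨p, hp, q, hq, hne, hd2⟩ := exists_dist_two_pair hG hd hclique h4
  set s := ∑ j ∈ J, x j with hs
  set K := J \ {p, q} with hK
  have hsub : ({p, q} : Finset (Fin n)) ⊆ J := by
    intro i hi; rcases Finset.mem_insert.mp hi with rfl | hi
    · exact hp
    · rw [Finset.mem_singleton] at hi; subst hi; exact hq
  have hsplit : (∑ j ∈ K, x j) + (x p + x q) = s := by
    rw [hs, hK]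
    have := Finset.sum_sdiff (f := x) hsub
    rw [Finset.sum_insert (by simp [hne]), Finset.sum_singleton] at this
    linarith
  set t := x p + x q with ht
  set r := ∑ j ∈ K, x j with hr
  have hKcard : 2 ≤ K.card := by
    rw [hK, Finset.card_sdiff_of_subset hsub]
    have : ({p, q} : Finset (Fin n)).card = 2 := by
      rw [Finset.card_insert_of_notMem (by simp [hne]), Finset.card_singleton]
    omega
  have hKne : K.Nonempty := Finset.card_pos.mp (by omega)
  have hKsub : K ⊆ J := Finset.sdiff_subset
  have hrpos : 0 < r := Finset.sum_pos (fun i hi => hpos i (hKsub hi)) hKne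
  have htpos : 0 < t := by
    have := hpos p hp; have := hpos q hq; rw [ht]; linarith
  have hspos : 0 < s := by linarith
  -- lam * t ≥ 2 s
  have hIt : 2 * s ≤ lam * t := by
    have h1 := pair_ineq hG heq hpos hp hq hne hd2
    have h2 := pair_ineq hG heq hpos hq hp hne.symm (by rwa [SimpleGraph.dist_comm])
    rw [ht]; rw [← hs] at h1 h2; nlinarith
  -- lam * r ≥ 2 s - r
  have hIr : 2 * s - r ≤ lam * r := by
    have hterm : ∀ i ∈ K, s - x i ≤ lam * x i := fun i hi =>
      base_ineq hG heq hpos (hKsub hi)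
    have hsum := Finset.sum_le_sum hterm
    rw [Finset.sum_sub_distrib, Finset.sum_const, ← Finset.mul_sum, ← hr, nsmul_eq_mul] at hsum
    have hcs : (2:ℝ) * s ≤ (K.card : ℝ) * s := by
      have : (2:ℝ) ≤ (K.card : ℝ) := by exact_mod_cast hKcard
      nlinarith
    nlinarith
  have hlam2 : 2 < lam := by nlinarith
  have hq1 : 2 * t ≤ (lam - 1) * r := by nlinarith
  have hq2 : 2 * r ≤ (lam - 2) * t := by nlinarith
  have hmul : (2 * t) * (2 * r) ≤ ((lam - 1) * r) * ((lam - 2) * t) :=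
    mul_le_mul hq1 hq2 (by linarith) (by nlinarith)
  have hfac : 4 ≤ (lam - 1) * (lam - 2) := by nlinarith [mul_pos hrpos htpos]
  obtain ⟨hs2, hlb, _⟩ := sqrt17_facts
  nlinarith [Real.sqrt_nonneg 17]

lemma support_card_ge4' (hG : G.Connected) (hd : G.diam = 2) (hclique : G.cliqueNum ≤ 3)
    (h122 : ∀ u v w : Fin n, G.Adj v w → G.dist u v = 2 → G.dist u w = 2 → False)
    (hK4e : ∀ p q r u : Fin n, G.dist p q = 2 → G.Adj p r → G.Adj p u → G.Adj q r →
      G.Adj q u → G.Adj r u → False)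
    (heq : ∀ i ∈ J, ∑ j ∈ J, distMatrix G i j * x j = lam * x i)
    (hpos : ∀ i ∈ J, 0 < x i) (h4 : 4 ≤ J.card) : 4 ≤ lam := by
  set s := ∑ j ∈ J, x j with hs
  by_cases hT : ∃ a ∈ J, ∃ b ∈ J, ∃ c ∈ J, a ≠ b ∧ a ≠ c ∧ b ≠ c ∧
      G.dist a b = 2 ∧ G.dist a c = 2 ∧ G.dist b c = 2
  · obtain ⟨a, ha, b, hb, c, hc, hab, hac, hbc, dab, dac, dbc⟩ := hT
    have i1 := triple_ineq hG heq hpos ha hb hc hab hac hbc dab dac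
    have i2 := triple_ineq hG heq hpos hb ha hc hab.symm hbc hac
      (by rwa [SimpleGraph.dist_comm]) dbc
    have i3 := triple_ineq hG heq hpos hc ha hb hac.symm hbc.symm hab
      (by rwa [SimpleGraph.dist_comm]) (by rwa [SimpleGraph.dist_comm])
    rw [← hs] at i1 i2 i3
    set T := x a + x b + x c with hTdef
    have hTsub : ({a, b, c} : Finset (Fin n)) ⊆ J := by
      intro i hi
      rcases Finset.mem_insert.mp hi with rfl | hi
      · exact ha
      · rcases Finset.mem_insert.mp hi with rfl | hi
        · exact hb
        · rw [Finset.mem_singleton] at hi; subst hi; exact hc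
    have hTs : T ≤ s := by
      have := Finset.sum_le_sum_of_subset_of_nonneg hTsub
        (fun i hi _ => le_of_lt (hpos i hi))
      rw [Finset.sum_insert (by simp [hab, hac]), Finset.sum_insert (by simp [hbc]),
        Finset.sum_singleton] at this
      rw [hTdef, hs]; linarith
    have hTpos : 0 < T := by
      have := hpos a ha; have := hpos b hb; have := hpos c hc; rw [hTdef]; linarith
    -- lam * T ≥ 3 s + T ≥ 4 T
    nlinarith
  · push_neg at hT
    -- matching property
    have hM : ∀ a ∈ J, ∀ b ∈ J, ∀ c ∈ J, a ≠ b → a ≠ c → b ≠ c →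
        G.dist a b = 2 → G.dist a c = 2 → False := by
      intro a ha b hb c hc hab hac hbc dab dac
      rcases dist_one_or_two hG hd hbc with h | h
      · exact h122 a b c (adj_of_dist_eq_one h) dab dac
      · exact hT a ha b hb c hc hab hac hbc dab dac h
    obtain ⟨p, hp, q, hq, hne, hd2⟩ := exists_dist_two_pair hG hd hclique h4
    set K := J \ {p, q} with hK
    have hsub : ({p, q} : Finset (Fin n)) ⊆ J := by
      intro i hi; rcases Finset.mem_insert.mp hi with rfl | hi
      · exact hp
      · rw [Finset.mem_singleton] at hi; subst hi; exact hq
    have hKsub : K ⊆ J := Finset.sdiff_subset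
    have hKcard : 2 ≤ K.card := by
      rw [hK, Finset.card_sdiff_of_subset hsub]
      have : ({p, q} : Finset (Fin n)).card = 2 := by
        rw [Finset.card_insert_of_notMem (by simp [hne]), Finset.card_singleton]
      omega
    -- every vertex of K is adjacent to both p and q
    have hadj : ∀ i ∈ K, G.Adj p i ∧ G.Adj q i := by
      intro i hi
      rw [hK, Finset.mem_sdiff] at hi
      obtain ⟨hiJ, hipq⟩ := hi
      simp only [Finset.mem_insert, Finset.mem_singleton, not_or] at hipq
      obtain ⟨hip, hiq⟩ := hipq
      constructor
      · rcases dist_one_or_two hG hd (Ne.symm hip : p ≠ i) with h | h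
        · exact adj_of_dist_eq_one h
        · exact absurd (hM p hp q hq i hiJ hne (Ne.symm hip) (Ne.symm hiq) hd2 h) not_false
      · rcases dist_one_or_two hG hd (Ne.symm hiq : q ≠ i) with h | h
        · exact adj_of_dist_eq_one h
        · exact absurd (hM q hq p hp i hiJ hne.symm (Ne.symm hiq) (Ne.symm hip)
            (by rwa [SimpleGraph.dist_comm]) h) not_false
    have hKmemJ : ∀ i ∈ K, i ∈ J := fun i hi => hKsub hi
    by_cases hJ4 : J.card = 4
    · -- K has exactly two elements
      have hKc : K.card = 2 := by
        rw [hK, Finset.card_sdiff_of_subset hsub]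
        have : ({p, q} : Finset (Fin n)).card = 2 := by
          rw [Finset.card_insert_of_notMem (by simp [hne]), Finset.card_singleton]
        omega
      obtain ⟨a, b, hab, hKeq⟩ := Finset.card_eq_two.mp hKc
      have haK : a ∈ K := by rw [hKeq]; simp
      have hbK : b ∈ K := by rw [hKeq]; simp
      have haJ := hKmemJ a haK
      have hbJ := hKmemJ b hbK
      rcases dist_one_or_two hG hd hab with h | h
      · exact absurd (hK4e p q a b hd2 (hadj a haK).1 (hadj b hbK).1 (hadj a haK).2
          (hadj b hbK).2 (adj_of_dist_eq_one h)) not_false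
      · -- C4 pattern: sum the four pair inequalities
        have i1 := pair_ineq hG heq hpos hp hq hne hd2
        have i2 := pair_ineq hG heq hpos hq hp hne.symm (by rwa [SimpleGraph.dist_comm])
        have i3 := pair_ineq hG heq hpos haJ hbJ hab h
        have i4 := pair_ineq hG heq hpos hbJ haJ hab.symm (by rwa [SimpleGraph.dist_comm])
        rw [← hs] at i1 i2 i3 i4
        have hsval : s = x a + x b + (x p + x q) := by
          rw [hs]
          have hds := Finset.sum_sdiff (f := x) hsub
          rw [Finset.sum_insert (by simp [hne]), Finset.sum_singleton, ← hK, hKeq,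
            Finset.sum_insert (by simp [hab]), Finset.sum_singleton] at hds
          linarith
        have hspos : 0 < s := by
          have := hpos p hp; have := hpos q hq; have := hpos a haJ; have := hpos b hbJ
          rw [hsval]; linarith
        nlinarith
    · -- |J| ≥ 5 : K has ≥ 3 elements, derive a contradiction
      exfalso
      have hKc : 3 ≤ K.card := by
        rw [hK, Finset.card_sdiff_of_subset hsub]
        have : ({p, q} : Finset (Fin n)).card = 2 := by
          rw [Finset.card_insert_of_notMem (by simp [hne]), Finset.card_singleton]
        omega
      obtain ⟨a, haK⟩ := Finset.card_pos.mp (by omega : 0 < K.card)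
      have h2 : 2 ≤ (K.erase a).card := by
        have := Finset.card_erase_of_mem haK; omega
      obtain ⟨b, hbK'⟩ := Finset.card_pos.mp (by omega : 0 < (K.erase a).card)
      have hbK : b ∈ K := Finset.mem_of_mem_erase hbK'
      have hba : b ≠ a := Finset.ne_of_mem_erase hbK'
      have h3 : 1 ≤ ((K.erase a).erase b).card := by
        have := Finset.card_erase_of_mem hbK'; omega
      obtain ⟨c, hcK''⟩ := Finset.card_pos.mp (by omega : 0 < ((K.erase a).erase b).card)
      have hcb : c ≠ b := Finset.ne_of_mem_erase hcK''
      have hcK' : c ∈ K.erase a := Finset.mem_of_mem_erase hcK''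
      have hca : c ≠ a := Finset.ne_of_mem_erase hcK'
      have hcK : c ∈ K := Finset.mem_of_mem_erase hcK'
      -- among a,b,c some pair is adjacent
      have hpair : ∃ α ∈ K, ∃ β ∈ K, α ≠ β ∧ G.Adj α β := by
        rcases dist_one_or_two hG hd (Ne.symm hba : a ≠ b) with h | h
        · exact ⟨a, haK, b, hbK, Ne.symm hba, adj_of_dist_eq_one h⟩
        · rcases dist_one_or_two hG hd (Ne.symm hca : a ≠ c) with h' | h'
          · exact ⟨a, haK, c, hcK, Ne.symm hca, adj_of_dist_eq_one h'⟩
          · exact absurd (hM a (hKmemJ a haK) b (hKmemJ b hbK) c (hKmemJ c hcK)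
              (Ne.symm hba) (Ne.symm hca) (Ne.symm hcb) h h') not_false
      obtain ⟨α, hαK, β, hβK, hαβ, hadjαβ⟩ := hpair
      exact hK4e p q α β hd2 (hadj α hαK).1 (hadj β hβK).1 (hadj α hαK).2
        (hadj β hβK).2 hadjαβ
end Ge4
section Chase
variable {n : ℕ} {G : SimpleGraph (Fin n)}

lemma embS4p {c x y p : Fin n} (hcx : G.Adj c x) (hcy : G.Adj c y) (hxy : G.Adj x y)
    (hcp : G.Adj c p) (hxp : ¬G.Adj x p) (hyp : ¬G.Adj y p) (hpx : p ≠ x) (hpy : p ≠ y) :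
    Nonempty (starPlusGraph 4 ↪g G) := by
  have hcx' := hcx.symm; have hcy' := hcy.symm; have hxy' := hxy.symm
  have hcp' := hcp.symm
  have hpx' : ¬G.Adj p x := fun h => hxp h.symm
  have hpy' : ¬G.Adj p y := fun h => hyp h.symm
  have e1 : c ≠ x := hcx.ne
  have e2 : c ≠ y := hcy.ne
  have e3 : x ≠ y := hxy.ne
  have e4 : c ≠ p := hcp.ne
  have e1' := e1.symm; have e2' := e2.symm; have e3' := e3.symm
  have e4' := e4.symm; have hpx'' := hpx.symm; have hpy'' := hpy.symm
  have hxp2 : x ≠ p := hpx.symm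
  have hyp2 : y ≠ p := hpy.symm
  refine ⟨⟨⟨![c, x, y, p], ?_⟩, ?_⟩⟩
  · intro a b hab
    fin_cases a <;> fin_cases b <;> simp_all
  · intro a b
    show G.Adj (![c, x, y, p] a) (![c, x, y, p] b) ↔ (starPlusGraph 4).Adj a b
    fin_cases a <;> fin_cases b <;>
      first
        | exact iff_of_false G.irrefl (fun h => (show _ ∧ _ from h).1 rfl)
        | exact iff_of_true (by assumption) ⟨by decide, by decide⟩
        | exact iff_of_false (by assumption) (by intro h; revert h; decide +kernel)
        | exact iff_of_false (by assumption)
            (fun h => by rcases h with ⟨h1, h2⟩; revert h2; decide)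

lemma embC5 {v0 v1 v2 v3 v4 : Fin n}
    (a01 : G.Adj v0 v1) (a12 : G.Adj v1 v2) (a23 : G.Adj v2 v3) (a34 : G.Adj v3 v4)
    (a40 : G.Adj v4 v0)
    (n02 : ¬G.Adj v0 v2) (n03 : ¬G.Adj v0 v3) (n13 : ¬G.Adj v1 v3) (n14 : ¬G.Adj v1 v4)
    (n24 : ¬G.Adj v2 v4)
    (d02 : v0 ≠ v2) (d03 : v0 ≠ v3) (d13 : v1 ≠ v3) (d14 : v1 ≠ v4) (d24 : v2 ≠ v4) :
    Nonempty (cycleGraph 5 ↪g G) := by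
  have a01' := a01.symm; have a12' := a12.symm; have a23' := a23.symm
  have a34' := a34.symm; have a40' := a40.symm
  have n02' : ¬G.Adj v2 v0 := fun h => n02 h.symm
  have n03' : ¬G.Adj v3 v0 := fun h => n03 h.symm
  have n13' : ¬G.Adj v3 v1 := fun h => n13 h.symm
  have n14' : ¬G.Adj v4 v1 := fun h => n14 h.symm
  have n24' : ¬G.Adj v4 v2 := fun h => n24 h.symm
  have e01 : v0 ≠ v1 := a01.ne
  have e12 : v1 ≠ v2 := a12.ne
  have e23 : v2 ≠ v3 := a23.ne
  have e34 : v3 ≠ v4 := a34.ne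
  have e40 : v4 ≠ v0 := a40.ne
  have e01' := e01.symm; have e12' := e12.symm; have e23' := e23.symm
  have e34' := e34.symm; have e40' := e40.symm
  have d02' := d02.symm; have d03' := d03.symm; have d13' := d13.symm
  have d14' := d14.symm; have d24' := d24.symm
  refine ⟨⟨⟨![v0, v1, v2, v3, v4], ?_⟩, ?_⟩⟩
  · intro a b hab
    fin_cases a <;> fin_cases b <;> simp_all
  · intro a b
    show G.Adj (![v0, v1, v2, v3, v4] a) (![v0, v1, v2, v3, v4] b) ↔ (cycleGraph 5).Adj a b
    fin_cases a <;> fin_cases b <;>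
      first
        | exact iff_of_false G.irrefl (by decide)
        | exact iff_of_true (by assumption) (by decide)
        | exact iff_of_false (by assumption) (by decide)

/-- The chase: a (1,2,2) configuration yields an induced C5 or S4+. -/
lemma chase (hG : G.Connected) (hd : G.diam = 2) {u v w : Fin n} (hvw : G.Adj v w)
    (h1 : G.dist u v = 2) (h2 : G.dist u w = 2) :
    Nonempty (cycleGraph 5 ↪g G) ∨ Nonempty (starPlusGraph 4 ↪g G) := by
  have huv : u ≠ v := ne_of_dist_two h1
  have huw : u ≠ w := ne_of_dist_two h2
  have nuv : ¬G.Adj u v := not_adj_of_dist_eq_two h1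
  have nuw : ¬G.Adj u w := not_adj_of_dist_eq_two h2
  obtain ⟨a, hua, hav⟩ := exists_common_of_dist_two hG h1
  by_cases haw : G.Adj a w
  · -- triangle a v w with pendant u at a
    right
    exact embS4p hav haw hvw hua.symm (fun h => nuv h.symm) (fun h => nuw h.symm) huv huw
  · -- a not adjacent to w
    obtain ⟨b, hub, hbw⟩ := exists_common_of_dist_two hG h2
    by_cases hbv : G.Adj b v
    · right
      exact embS4p hbv hbw hvw hub.symm (fun h => nuv h.symm) (fun h => nuw h.symm) huv huw
    · by_cases hab : G.Adj a b
      · -- triangle u a b with pendant v at a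
        right
        exact embS4p hua.symm hab hub hav nuv hbv huv.symm
          (fun h => nuv (by rw [h]; exact hub))
      · -- induced C5 : u - a - v - w - b - u
        left
        exact embC5 hua hav hvw hbw.symm hub.symm
          nuv nuw haw hab (fun h => hbv h.symm)
          huv huw (fun h => nuw (by rw [← h]; exact hua))
          (fun h => hbv (by rw [← h]; exact hav))
          (fun h => nuv (by rw [h]; exact hub))

end Chase
section Wrap
variable {n : ℕ} {G : SimpleGraph (Fin n)}

lemma classify_main (hG : G.Connected) (hd : G.diam = 2) (hclique : G.cliqueNum ≤ 3)
    {lam : ℝ} (hlam : lam ∈ distParetoSet G) :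
    lam = 0 ∨ lam = 1 ∨ lam = 2 ∨ lam = 1 + Real.sqrt 3 ∨
      ((∃ u v w, G.Adj v w ∧ G.dist u v = 2 ∧ G.dist u w = 2) ∧ lam = (1 + Real.sqrt 33) / 2) ∨
      (3 + Real.sqrt 17) / 2 ≤ lam := by
  obtain ⟨x, hp⟩ := hlam
  obtain ⟨J, hJne, hpos, hzero, heq⟩ := exists_support hp
  have hc1 := hJne.card_pos
  rcases Nat.lt_or_ge J.card 4 with h | h
  · interval_cases h' : J.card
    · exact Or.inl (support_card_one heq hpos h')
    · rcases support_card_two hG hd heq hpos h' with h | h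
      · exact Or.inr (Or.inl h)
      · exact Or.inr (Or.inr (Or.inl h))
    · rcases support_card_three hG hd heq hpos h' with h | h | h | h
      · exact Or.inr (Or.inr (Or.inl h))
      · exact Or.inr (Or.inr (Or.inr (Or.inl h)))
      · exact Or.inr (Or.inr (Or.inr (Or.inr (Or.inl h))))
      · refine Or.inr (Or.inr (Or.inr (Or.inr (Or.inr ?_))))
        obtain ⟨hs2, hlb, hub⟩ := sqrt17_facts
        rw [h]; nlinarith
  · exact Or.inr (Or.inr (Or.inr (Or.inr (Or.inr
      (support_card_ge4 hG hd hclique heq hpos h)))))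

lemma classify_case3 (hG : G.Connected) (hd : G.diam = 2) (hclique : G.cliqueNum ≤ 3)
    (h122 : ∀ u v w : Fin n, G.Adj v w → G.dist u v = 2 → G.dist u w = 2 → False)
    (hK4e : ∀ p q r u : Fin n, G.dist p q = 2 → G.Adj p r → G.Adj p u → G.Adj q r →
      G.Adj q u → G.Adj r u → False)
    {lam : ℝ} (hlam : lam ∈ distParetoSet G) :
    lam = 0 ∨ lam = 1 ∨ lam = 2 ∨ lam = 1 + Real.sqrt 3 ∨ 4 ≤ lam := by
  obtain ⟨x, hp⟩ := hlam
  obtain ⟨J, hJne, hpos, hzero, heq⟩ := exists_support hp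
  have hc1 := hJne.card_pos
  rcases Nat.lt_or_ge J.card 4 with h | h
  · interval_cases h' : J.card
    · exact Or.inl (support_card_one heq hpos h')
    · rcases support_card_two hG hd heq hpos h' with h | h
      · exact Or.inr (Or.inl h)
      · exact Or.inr (Or.inr (Or.inl h))
    · rcases support_card_three hG hd heq hpos h' with h | h | h | h
      · exact Or.inr (Or.inr (Or.inl h))
      · exact Or.inr (Or.inr (Or.inr (Or.inl h)))
      · obtain ⟨⟨u, v, w, havw, hd1, hd2⟩, _⟩ := h
        exact absurd (h122 u v w havw hd1 hd2) not_false
      · exact Or.inr (Or.inr (Or.inr (Or.inr (le_of_eq h.symm))))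
  · exact Or.inr (Or.inr (Or.inr (Or.inr
      (support_card_ge4' hG hd hclique h122 hK4e heq hpos h))))

lemma triple_of_embs (hG : G.Connected) (hd : G.diam = 2)
    (h : Nonempty (cycleGraph 5 ↪g G) ∨ Nonempty (starPlusGraph 4 ↪g G)) :
    ∃ u v w, G.Adj v w ∧ G.dist u v = 2 ∧ G.dist u w = 2 := by
  rcases h with hf | hf <;> obtain ⟨f⟩ := hf
  · refine ⟨f 3, f 0, f 1, f.map_adj_iff.mpr (by decide), ?_, ?_⟩
    · exact dist_eq_two hG hd (f.injective.ne (by decide))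
        (fun h => (by decide : ¬(cycleGraph 5).Adj 3 0) (f.map_adj_iff.mp h))
    · exact dist_eq_two hG hd (f.injective.ne (by decide))
        (fun h => (by decide : ¬(cycleGraph 5).Adj 3 1) (f.map_adj_iff.mp h))
  · refine ⟨f 3, f 1, f 2, f.map_adj_iff.mpr ⟨by decide, by decide⟩, ?_, ?_⟩
    · exact dist_eq_two hG hd (f.injective.ne (by decide))
        (fun h => (f.map_adj_iff.mp h).2.elim (fun h' => by revert h'; decide)
          (fun h' => by revert h'; decide))
    · exact dist_eq_two hG hd (f.injective.ne (by decide))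
        (fun h => (f.map_adj_iff.mp h).2.elim (fun h' => by revert h'; decide)
          (fun h' => by revert h'; decide))

lemma k4e_pattern_of_emb (hG : G.Connected) (hd : G.diam = 2)
    (h : Nonempty (k4MinusE ↪g G)) :
    ∃ p q r u, G.dist p q = 2 ∧ G.Adj p r ∧ G.Adj p u ∧ G.Adj q r ∧ G.Adj q u ∧ G.Adj r u := by
  obtain ⟨f⟩ := h
  refine ⟨f 0, f 1, f 2, f 3, ?_,
    f.map_adj_iff.mpr ⟨by decide, by decide⟩, f.map_adj_iff.mpr ⟨by decide, by decide⟩,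
    f.map_adj_iff.mpr ⟨by decide, by decide⟩, f.map_adj_iff.mpr ⟨by decide, by decide⟩,
    f.map_adj_iff.mpr ⟨by decide, by decide⟩⟩
  exact dist_eq_two hG hd (f.injective.ne (by decide))
    (fun h => (f.map_adj_iff.mp h).2 (Or.inl ⟨rfl, rfl⟩))

lemma four_mem_case3 (hn : 4 ≤ n) (hG : G.Connected) (hd : G.diam = 2)
    (h122 : ∀ u v w : Fin n, G.Adj v w → G.dist u v = 2 → G.dist u w = 2 → False)
    (hK4e : ∀ p q r u : Fin n, G.dist p q = 2 → G.Adj p r → G.Adj p u → G.Adj q r →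
      G.Adj q u → G.Adj r u → False) :
    (4:ℝ) ∈ distParetoSet G := by
  have hNE : Nonempty (Fin n) := ⟨⟨0, by omega⟩⟩
  obtain ⟨p, q, hpq⟩ := SimpleGraph.exists_dist_eq_diam (G := G)
  rw [hd] at hpq
  have hne : p ≠ q := ne_of_dist_two hpq
  obtain ⟨a, hpa, haq⟩ := exists_common_of_dist_two hG hpq
  have hb : ∃ b : Fin n, b ∉ ({p, q, a} : Finset (Fin n)) := by
    by_contra hcon
    push_neg at hcon
    have hsub : (Finset.univ : Finset (Fin n)) ⊆ {p, q, a} := fun b _ => hcon b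
    have h1 := Finset.card_le_card hsub
    have h2 : ({p, q, a} : Finset (Fin n)).card ≤ 3 := by
      apply le_trans (Finset.card_insert_le _ _)
      have := Finset.card_insert_le q ({a} : Finset (Fin n))
      simp at this ⊢
      omega
    rw [Finset.card_univ, Fintype.card_fin] at h1
    omega
  obtain ⟨b, hbmem⟩ := hb
  simp only [Finset.mem_insert, Finset.mem_singleton, not_or] at hbmem
  obtain ⟨hbp', hbq', hba'⟩ := hbmem
  by_cases hbp : G.Adj b p <;> by_cases hbq : G.Adj b q
  · by_cases hab2 : G.Adj a b
    · exact absurd (hK4e p q a b hpq hpa hbp.symm haq.symm hbq.symm hab2) not_false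
    · have hdab : G.dist a b = 2 := dist_eq_two hG hd (Ne.symm hba') hab2
      exact four_mem_c4 hpq hdab hpa hbp.symm haq.symm hbq.symm
  · exact absurd (h122 q b p hbp
      (dist_eq_two hG hd (Ne.symm hbq') (fun h => hbq h.symm))
      (by rwa [SimpleGraph.dist_comm])) not_false
  · exact absurd (h122 p b q hbq
      (dist_eq_two hG hd (Ne.symm hbp') (fun h => hbp h.symm)) hpq) not_false
  · exact four_mem_triple hpq
      (dist_eq_two hG hd (Ne.symm hbp') (fun h => hbp h.symm))
      (dist_eq_two hG hd (Ne.symm hbq') (fun h => hbq h.symm))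

end Wrap
lemma ncard_low : ({0, 1, 2, 1 + Real.sqrt 3} : Set ℝ).ncard = 4 := by
  obtain ⟨hs2, hlb, hub⟩ := sqrt3_facts
  have e1 : ({2, 1 + Real.sqrt 3} : Set ℝ).ncard = 2 := by
    rw [Set.ncard_insert_of_notMem (by
        simp only [Set.mem_singleton_iff]; intro h; nlinarith) (Set.finite_singleton _),
      Set.ncard_singleton]
  have e2 : ({1, 2, 1 + Real.sqrt 3} : Set ℝ).ncard = 3 := by
    rw [Set.ncard_insert_of_notMem (by
        simp only [Set.mem_insert_iff, Set.mem_singleton_iff]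
        push_neg
        constructor
        · norm_num
        · intro h; nlinarith) ((Set.finite_singleton _).insert _), e1]
  rw [Set.ncard_insert_of_notMem (by
      simp only [Set.mem_insert_iff, Set.mem_singleton_iff]
      push_neg
      refine ⟨by norm_num, by norm_num, ?_⟩
      intro h; nlinarith) (((Set.finite_singleton _).insert _).insert _), e2]

set_option maxHeartbeats 2000000 in
theorem stmt15 (n : ℕ) (hn : 4 ≤ n) (G : SimpleGraph (Fin n)) (hG : G.Connected)
    (hdiam : G.diam = 2) (hclique : G.cliqueNum ≤ 3) :
    ((Nonempty (cycleGraph 5 ↪g G) ∨ Nonempty (starPlusGraph 4 ↪g G)) →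
      IsKthSmallest (distParetoSet G) 5 ((1 + Real.sqrt 33) / 2)) ∧
    ((¬(Nonempty (cycleGraph 5 ↪g G) ∨ Nonempty (starPlusGraph 4 ↪g G)) ∧
        Nonempty (k4MinusE ↪g G)) →
      IsKthSmallest (distParetoSet G) 5 ((3 + Real.sqrt 17) / 2)) ∧
    ((¬(Nonempty (cycleGraph 5 ↪g G) ∨ Nonempty (starPlusGraph 4 ↪g G)) ∧
        ¬Nonempty (k4MinusE ↪g G)) →
      IsKthSmallest (distParetoSet G) 5 4) := by
  obtain ⟨s3, s3l, s3u⟩ := sqrt3_facts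
  obtain ⟨s33, s33l, s33u⟩ := sqrt33_facts
  obtain ⟨s17, s17l, s17u⟩ := sqrt17_facts
  have hNE : Nonempty (Fin n) := ⟨⟨0, by omega⟩⟩
  obtain ⟨u0, v0, hd0⟩ := SimpleGraph.exists_dist_eq_diam (G := G)
  rw [hdiam] at hd0
  obtain ⟨a0, h0a, h0b⟩ := exists_common_of_dist_two hG hd0
  have mem0 : (0:ℝ) ∈ distParetoSet G := zero_mem (by omega)
  have mem1 : (1:ℝ) ∈ distParetoSet G := one_mem h0a
  have mem2 : (2:ℝ) ∈ distParetoSet G := two_mem hd0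
  have mem3 : 1 + Real.sqrt 3 ∈ distParetoSet G := sqrt3_mem h0a h0b hd0
  refine ⟨?_, ?_, ?_⟩
  · -- Case 1 : C5 or S4+ present
    intro hcase
    obtain ⟨u, v, w, havw, hd1, hd2⟩ := triple_of_embs hG hdiam hcase
    have memT : (1 + Real.sqrt 33) / 2 ∈ distParetoSet G := sqrt33_mem havw hd1 hd2
    refine ⟨memT, ?_⟩
    have hset : {y ∈ distParetoSet G | y < (1 + Real.sqrt 33) / 2} =
        ({0, 1, 2, 1 + Real.sqrt 3} : Set ℝ) := by
      ext y
      simp only [Set.mem_setOf_eq, Set.mem_insert_iff, Set.mem_singleton_iff]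
      constructor
      · rintro ⟨hy, hlt⟩
        rcases classify_main hG hdiam hclique hy with h | h | h | h | ⟨_, h⟩ | h
        · tauto
        · tauto
        · tauto
        · tauto
        · exfalso; rw [h] at hlt; linarith
        · exfalso; nlinarith
      · rintro (rfl | rfl | rfl | rfl)
        · exact ⟨mem0, by nlinarith⟩
        · exact ⟨mem1, by nlinarith⟩
        · exact ⟨mem2, by nlinarith⟩
        · exact ⟨mem3, by nlinarith⟩
    rw [hset, ncard_low]
  · -- Case 2 : no C5/S4+, but K4-e present
    rintro ⟨hno, hK⟩
    have h122 : ∀ u v w : Fin n, G.Adj v w → G.dist u v = 2 → G.dist u w = 2 → False :=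
      fun u v w havw h1 h2 => hno (chase hG hdiam havw h1 h2)
    obtain ⟨p, q, r, u, hdpq, e1, e2, e3, e4, e5⟩ := k4e_pattern_of_emb hG hdiam hK
    have memT : (3 + Real.sqrt 17) / 2 ∈ distParetoSet G := sqrt17_mem hdpq e1 e2 e3 e4 e5
    refine ⟨memT, ?_⟩
    have hset : {y ∈ distParetoSet G | y < (3 + Real.sqrt 17) / 2} =
        ({0, 1, 2, 1 + Real.sqrt 3} : Set ℝ) := by
      ext y
      simp only [Set.mem_setOf_eq, Set.mem_insert_iff, Set.mem_singleton_iff]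
      constructor
      · rintro ⟨hy, hlt⟩
        rcases classify_main hG hdiam hclique hy with h | h | h | h | ⟨⟨a, b, c, h1, h2, h3⟩, _⟩ | h
        · tauto
        · tauto
        · tauto
        · tauto
        · exact absurd (h122 a b c h1 h2 h3) not_false
        · exfalso; linarith
      · rintro (rfl | rfl | rfl | rfl)
        · exact ⟨mem0, by nlinarith⟩
        · exact ⟨mem1, by nlinarith⟩
        · exact ⟨mem2, by nlinarith⟩
        · exact ⟨mem3, by nlinarith⟩
    rw [hset, ncard_low]
  · -- Case 3 : neither
    rintro ⟨hno, hnoK⟩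
    have h122 : ∀ u v w : Fin n, G.Adj v w → G.dist u v = 2 → G.dist u w = 2 → False :=
      fun u v w havw h1 h2 => hno (chase hG hdiam havw h1 h2)
    have hK4e : ∀ p q r u : Fin n, G.dist p q = 2 → G.Adj p r → G.Adj p u → G.Adj q r →
        G.Adj q u → G.Adj r u → False :=
      fun p q r u hd2 h1 h2 h3 h4 h5 =>
        hnoK (embK4e (not_adj_of_dist_eq_two hd2) (ne_of_dist_two hd2) h1 h2 h3 h4 h5)
    have memT : (4:ℝ) ∈ distParetoSet G := four_mem_case3 hn hG hdiam h122 hK4e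
    refine ⟨memT, ?_⟩
    have hset : {y ∈ distParetoSet G | y < 4} = ({0, 1, 2, 1 + Real.sqrt 3} : Set ℝ) := by
      ext y
      simp only [Set.mem_setOf_eq, Set.mem_insert_iff, Set.mem_singleton_iff]
      constructor
      · rintro ⟨hy, hlt⟩
        rcases classify_case3 hG hdiam hclique h122 hK4e hy with h | h | h | h | h
        · tauto
        · tauto
        · tauto
        · tauto
        · exfalso; linarith
      · rintro (rfl | rfl | rfl | rfl)
        · exact ⟨mem0, by nlinarith⟩
        · exact ⟨mem1, by nlinarith⟩
        · exact ⟨mem2, by nlinarith⟩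
        · exact ⟨mem3, by nlinarith⟩
    rw [hset, ncard_low]
end

section
/- If G is a connected graph with at least 5 vertices and μ₅(G) = (3+√17)/2, then μ₆(G) = 4. -/
open Matrix SimpleGraph

set_option maxHeartbeats 1600000

lemma p17_mv {n : ℕ} (A : Matrix (Fin n) (Fin n) ℝ) (v : Fin n → ℝ) (i : Fin n) :
    A.mulVec v i = ∑ j, A i j * v j := rfl

lemma p17_dp {n : ℕ} (v w : Fin n → ℝ) : v ⬝ᵥ w = ∑ i, v i * w i := rfl

/-- Build a Pareto eigenvalue from an eigen-equation on the support. -/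
lemma p17_mk {n : ℕ} (A : Matrix (Fin n) (Fin n) ℝ) (lam : ℝ) (x : Fin n → ℝ)
    (hA : ∀ i j, 0 ≤ A i j) (hx : ∀ i, 0 ≤ x i) (hx0 : x ≠ 0) (hlam : 0 ≤ lam)
    (heq : ∀ i, x i ≠ 0 → A.mulVec x i = lam * x i) :
    IsParetoEigenvalue A lam := by
  refine ⟨x, hx0, hx, ?_, ?_⟩
  · intro i
    by_cases h : x i = 0
    · rw [h, mul_zero, p17_mv]
      exact Finset.sum_nonneg fun j _ => mul_nonneg (hA i j) (hx j)
    · rw [heq i h]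
  · have hxx : x ⬝ᵥ x ≠ 0 := fun h => hx0 (dotProduct_self_eq_zero.mp h)
    have hnum : x ⬝ᵥ A.mulVec x = lam * (x ⬝ᵥ x) := by
      rw [p17_dp, p17_dp, Finset.mul_sum]
      refine Finset.sum_congr rfl fun i _ => ?_
      by_cases h : x i = 0
      · simp [h]
      · rw [heq i h]; ring
    rw [hnum, mul_div_assoc, div_self hxx, mul_one]

/-- Extract the eigen-equation on the support from a Pareto eigenpair. -/
lemma p17_elim {n : ℕ} {A : Matrix (Fin n) (Fin n) ℝ} {lam : ℝ} {x : Fin n → ℝ}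
    (hA : ∀ i j, 0 ≤ A i j) (hp : IsParetoEigenpair A lam x) :
    (∀ i, x i ≠ 0 → A.mulVec x i = lam * x i) ∧ 0 ≤ lam ∧
      x ⬝ᵥ A.mulVec x = lam * (x ⬝ᵥ x) ∧ 0 < x ⬝ᵥ x := by
  obtain ⟨hx0, hx, hineq, hray⟩ := hp
  have hxx : 0 < x ⬝ᵥ x := by
    rcases lt_or_eq_of_le (show (0:ℝ) ≤ x ⬝ᵥ x by
      rw [p17_dp]; exact Finset.sum_nonneg fun i _ => mul_self_nonneg (x i)) with h | h
    · exact h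
    · exact absurd (dotProduct_self_eq_zero.mp h.symm) hx0
  have hnum : x ⬝ᵥ A.mulVec x = lam * (x ⬝ᵥ x) := by
    rw [hray]; field_simp
  have hzero : ∑ i, x i * (A.mulVec x i - lam * x i) = 0 := by
    have h1 : x ⬝ᵥ A.mulVec x - lam * (x ⬝ᵥ x) = ∑ i, x i * (A.mulVec x i - lam * x i) := by
      rw [p17_dp, p17_dp, Finset.mul_sum, ← Finset.sum_sub_distrib]
      exact Finset.sum_congr rfl fun i _ => by ring
    rw [← h1, hnum, sub_self]
  have hterm : ∀ i ∈ Finset.univ, (0:ℝ) ≤ x i * (A.mulVec x i - lam * x i) := fun i _ =>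
    mul_nonneg (hx i) (sub_nonneg.mpr (hineq i))
  have hall := (Finset.sum_eq_zero_iff_of_nonneg hterm).mp hzero
  have hlam : 0 ≤ lam := by
    rw [hray]
    apply div_nonneg _ hxx.le
    rw [p17_dp]
    refine Finset.sum_nonneg fun i _ => mul_nonneg (hx i) ?_
    rw [p17_mv]
    exact Finset.sum_nonneg fun j _ => mul_nonneg (hA i j) (hx j)
  refine ⟨fun i hi => ?_, hlam, hnum, hxx⟩
  have h2 := hall i (Finset.mem_univ i)
  have hxi : 0 < x i := (hx i).lt_of_ne' hi
  nlinarith [h2]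

lemma p17_mv' {n : ℕ} (A : Matrix (Fin n) (Fin n) ℝ) (v : Fin n → ℝ) (i : Fin n) :
    A.mulVec v i = ∑ j, A i j * v j := rfl

lemma p17_dp' {n : ℕ} (v w : Fin n → ℝ) : v ⬝ᵥ w = ∑ i, v i * w i := rfl

/-- Rayleigh-type bound: if `y` is a nonnegative vector satisfying the eigen-equation for `lam`
on its support, then for every nonnegative `z` supported inside the support of `y`,
`zᵀAz ≤ lam zᵀz`. -/
lemma p17_rayleigh {n : ℕ} {A : Matrix (Fin n) (Fin n) ℝ} {lam : ℝ} {y : Fin n → ℝ}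
    (hA : ∀ i j, 0 ≤ A i j) (hAs : ∀ i j, A i j = A j i)
    (hy : ∀ i, 0 ≤ y i) (heq : ∀ i, y i ≠ 0 → A.mulVec y i = lam * y i)
    (z : Fin n → ℝ) (hz : ∀ i, 0 ≤ z i) (hsupp : ∀ i, z i ≠ 0 → y i ≠ 0) :
    z ⬝ᵥ A.mulVec z ≤ lam * (z ⬝ᵥ z) := by
  have key : ∀ i j, 2 * (z i * (A i j * z j)) ≤
      A i j * (z i ^ 2 * y j / y i) + A j i * (z j ^ 2 * y i / y j) := by
    intro i j
    rcases eq_or_ne (z i) 0 with h1 | h1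
    · rw [h1]
      have t1 : 0 ≤ A i j * ((0:ℝ) ^ 2 * y j / y i) := by norm_num
      have t2 : 0 ≤ A j i * (z j ^ 2 * y i / y j) :=
        mul_nonneg (hA j i) (div_nonneg (mul_nonneg (sq_nonneg _) (hy i)) (hy j))
      linarith
    rcases eq_or_ne (z j) 0 with h2 | h2
    · rw [h2]
      have t2 : 0 ≤ A j i * ((0:ℝ) ^ 2 * y i / y j) := by norm_num
      have t1 : 0 ≤ A i j * (z i ^ 2 * y j / y i) :=
        mul_nonneg (hA i j) (div_nonneg (mul_nonneg (sq_nonneg _) (hy j)) (hy i))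
      linarith
    · have hyi : 0 < y i := (hy i).lt_of_ne' (hsupp i h1)
      have hyj : 0 < y j := (hy j).lt_of_ne' (hsupp j h2)
      rw [hAs j i]
      have hrw : A i j * (z i ^ 2 * y j / y i) + A i j * (z j ^ 2 * y i / y j)
          = A i j * ((z i ^ 2 * (y j * y j) + z j ^ 2 * (y i * y i)) / (y i * y j)) := by
        field_simp
      rw [hrw]
      have hcore : 2 * (z i * z j) ≤ (z i ^ 2 * (y j * y j) + z j ^ 2 * (y i * y i)) / (y i * y j) := by
        rw [le_div_iff₀ (by positivity)]
        nlinarith [sq_nonneg (z i * y j - z j * y i)]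
      calc 2 * (z i * (A i j * z j)) = A i j * (2 * (z i * z j)) := by ring
        _ ≤ A i j * ((z i ^ 2 * (y j * y j) + z j ^ 2 * (y i * y i)) / (y i * y j)) :=
            mul_le_mul_of_nonneg_left hcore (hA i j)
  have hinner : ∀ i, ∑ j, A i j * (z i ^ 2 * y j / y i) = lam * z i ^ 2 := by
    intro i
    rcases eq_or_ne (z i) 0 with h | h
    · simp [h]
    · have hyi : y i ≠ 0 := hsupp i h
      have step : ∀ j, A i j * (z i ^ 2 * y j / y i) = (z i ^ 2 / y i) * (A i j * y j) := by
        intro j; field_simp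
      rw [Finset.sum_congr rfl fun j _ => step j, ← Finset.mul_sum, ← p17_mv', heq i hyi]
      field_simp
  have main : 2 * (z ⬝ᵥ A.mulVec z) ≤ 2 * (lam * (z ⬝ᵥ z)) := by
    have e1 : z ⬝ᵥ A.mulVec z = ∑ i, ∑ j, z i * (A i j * z j) := by
      rw [p17_dp']
      exact Finset.sum_congr rfl fun i _ => by rw [p17_mv', Finset.mul_sum]
    have e2 : z ⬝ᵥ z = ∑ i, z i ^ 2 := by
      rw [p17_dp']; exact Finset.sum_congr rfl fun i _ => (sq (z i)).symm ▸ by ring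
    rw [e1, e2]
    calc 2 * ∑ i, ∑ j, z i * (A i j * z j)
        = ∑ i, ∑ j, 2 * (z i * (A i j * z j)) := by
          rw [Finset.mul_sum]; exact Finset.sum_congr rfl fun i _ => by rw [Finset.mul_sum]
      _ ≤ ∑ i, ∑ j, (A i j * (z i ^ 2 * y j / y i) + A j i * (z j ^ 2 * y i / y j)) :=
          Finset.sum_le_sum fun i _ => Finset.sum_le_sum fun j _ => key i j
      _ = (∑ i, ∑ j, A i j * (z i ^ 2 * y j / y i))
          + ∑ i, ∑ j, A j i * (z j ^ 2 * y i / y j) := by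
          rw [← Finset.sum_add_distrib]
          exact Finset.sum_congr rfl fun i _ => by rw [← Finset.sum_add_distrib]
      _ = (∑ i, ∑ j, A i j * (z i ^ 2 * y j / y i))
          + ∑ j, ∑ i, A j i * (z j ^ 2 * y i / y j) := by rw [Finset.sum_comm]
      _ = 2 * ∑ i, ∑ j, A i j * (z i ^ 2 * y j / y i) := by ring
      _ = 2 * ∑ i, lam * z i ^ 2 := by
          exact congrArg (2 * ·) (Finset.sum_congr rfl fun i _ => hinner i)
      _ = 2 * (lam * ∑ i, z i ^ 2) := by rw [← Finset.mul_sum]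
  linarith

lemma p17_dm {n : ℕ} (G : SimpleGraph (Fin n)) (i j : Fin n) :
    distMatrix G i j = (G.dist i j : ℝ) := rfl

lemma p17_dm_nn {n : ℕ} (G : SimpleGraph (Fin n)) : ∀ i j, 0 ≤ distMatrix G i j :=
  fun i j => Nat.cast_nonneg _

lemma p17_dm_sym {n : ℕ} (G : SimpleGraph (Fin n)) : ∀ i j, distMatrix G i j = distMatrix G j i :=
  fun i j => by simp [p17_dm, SimpleGraph.dist_comm]

lemma p17_dm_self {n : ℕ} (G : SimpleGraph (Fin n)) (i : Fin n) : distMatrix G i i = 0 := by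
  simp [p17_dm]

lemma p17_mem1 {n : ℕ} (G : SimpleGraph (Fin n)) (a : Fin n) :
    (0:ℝ) ∈ distParetoSet G := by
  refine p17_mk _ _ (Pi.single a 1) (p17_dm_nn G) ?_ ?_ le_rfl ?_
  · intro i
    rcases eq_or_ne i a with h | h
    · subst h; simp
    · simp [Pi.single_eq_of_ne h]
  · intro h
    have := congrFun h a
    simp at this
  · intro i hi
    have hia : i = a := by
      by_contra h; exact hi (Pi.single_eq_of_ne h 1)
    subst hia
    rw [Matrix.mulVec_single]
    simp [p17_dm_self]

lemma p17_mem2 {n : ℕ} (G : SimpleGraph (Fin n)) {a b : Fin n} (hab : a ≠ b) :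
    ((G.dist a b : ℝ)) ∈ distParetoSet G := by
  set x : Fin n → ℝ := Pi.single a 1 + Pi.single b 1 with hx
  have hxa : x a = 1 := by simp [hx, Pi.single_eq_of_ne hab]
  have hxb : x b = 1 := by simp [hx, Pi.single_eq_of_ne hab.symm]
  have hmv : ∀ i, (distMatrix G).mulVec x i
      = distMatrix G i a * 1 + distMatrix G i b * 1 := by
    intro i
    rw [hx, Matrix.mulVec_add, Pi.add_apply, Matrix.mulVec_single, Matrix.mulVec_single]
    rfl
  refine p17_mk _ _ x (p17_dm_nn G) ?_ ?_ (Nat.cast_nonneg _) ?_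
  · intro i
    rcases eq_or_ne i a with h | h
    · subst h; rw [hxa]; norm_num
    rcases eq_or_ne i b with h' | h'
    · subst h'; rw [hxb]; norm_num
    · simp [hx, Pi.single_eq_of_ne h, Pi.single_eq_of_ne h']
  · intro h
    have := congrFun h a
    rw [hxa] at this; simp at this
  · intro i hi
    have : i = a ∨ i = b := by
      by_contra h
      push_neg at h
      exact hi (by simp [hx, Pi.single_eq_of_ne h.1, Pi.single_eq_of_ne h.2])
    rcases this with h | h
    · rw [h, hmv, hxa, p17_dm_self, p17_dm]
      ring
    · rw [h, hmv, hxb, p17_dm_self, p17_dm_sym G b a, p17_dm]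
      ring

lemma p17_mem3 {n : ℕ} (G : SimpleGraph (Fin n)) {a b c : Fin n}
    (hab : a ≠ b) (hac : a ≠ c) (hbc : b ≠ c)
    {ca cb cc lam : ℝ} (ha : 0 < ca) (hb : 0 < cb) (hc : 0 < cc) (hlam : 0 ≤ lam)
    (e1 : (G.dist a b : ℝ) * cb + (G.dist a c : ℝ) * cc = lam * ca)
    (e2 : (G.dist a b : ℝ) * ca + (G.dist b c : ℝ) * cc = lam * cb)
    (e3 : (G.dist a c : ℝ) * ca + (G.dist b c : ℝ) * cb = lam * cc) :
    lam ∈ distParetoSet G := by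
  set x : Fin n → ℝ := Pi.single a ca + Pi.single b cb + Pi.single c cc with hx
  have hxa : x a = ca := by
    simp [hx, Pi.single_eq_of_ne hab, Pi.single_eq_of_ne hac]
  have hxb : x b = cb := by
    simp [hx, Pi.single_eq_of_ne hab.symm, Pi.single_eq_of_ne hbc]
  have hxc : x c = cc := by
    simp [hx, Pi.single_eq_of_ne hac.symm, Pi.single_eq_of_ne hbc.symm]
  have hmv : ∀ i, (distMatrix G).mulVec x i
      = distMatrix G i a * ca + distMatrix G i b * cb + distMatrix G i c * cc := by
    intro i
    rw [hx, Matrix.mulVec_add, Matrix.mulVec_add, Pi.add_apply, Pi.add_apply,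
      Matrix.mulVec_single, Matrix.mulVec_single, Matrix.mulVec_single]
    rfl
  refine p17_mk _ _ x (p17_dm_nn G) ?_ ?_ hlam ?_
  · intro i
    rcases eq_or_ne i a with h | h
    · subst h; rw [hxa]; exact ha.le
    rcases eq_or_ne i b with h' | h'
    · subst h'; rw [hxb]; exact hb.le
    rcases eq_or_ne i c with h'' | h''
    · subst h''; rw [hxc]; exact hc.le
    · simp [hx, Pi.single_eq_of_ne h, Pi.single_eq_of_ne h', Pi.single_eq_of_ne h'']
  · intro h
    have := congrFun h a
    rw [hxa] at this; simp at this; exact ha.ne' this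
  · intro i hi
    have : i = a ∨ i = b ∨ i = c := by
      by_contra h
      push_neg at h
      exact hi (by simp [hx, Pi.single_eq_of_ne h.1, Pi.single_eq_of_ne h.2.1,
        Pi.single_eq_of_ne h.2.2])
    rcases this with h | h | h
    · rw [h, hmv, hxa, p17_dm_self, p17_dm, p17_dm]
      linarith [e1]
    · rw [h, hmv, hxb, p17_dm_self, p17_dm_sym G b a, p17_dm, p17_dm]
      linarith [e2]
    · rw [h, hmv, hxc, p17_dm_self, p17_dm_sym G c a, p17_dm_sym G c b, p17_dm, p17_dm]
      linarith [e3]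

lemma p17_mem4 {n : ℕ} (G : SimpleGraph (Fin n)) {a b c d : Fin n}
    (hab : a ≠ b) (hac : a ≠ c) (had : a ≠ d) (hbc : b ≠ c) (hbd : b ≠ d) (hcd : c ≠ d)
    {ca cb cc cd' lam : ℝ} (ha : 0 < ca) (hb : 0 < cb) (hc : 0 < cc) (hd : 0 < cd')
    (hlam : 0 ≤ lam)
    (e1 : (G.dist a b : ℝ) * cb + (G.dist a c : ℝ) * cc + (G.dist a d : ℝ) * cd' = lam * ca)
    (e2 : (G.dist a b : ℝ) * ca + (G.dist b c : ℝ) * cc + (G.dist b d : ℝ) * cd' = lam * cb)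
    (e3 : (G.dist a c : ℝ) * ca + (G.dist b c : ℝ) * cb + (G.dist c d : ℝ) * cd' = lam * cc)
    (e4 : (G.dist a d : ℝ) * ca + (G.dist b d : ℝ) * cb + (G.dist c d : ℝ) * cc = lam * cd') :
    lam ∈ distParetoSet G := by
  set x : Fin n → ℝ := Pi.single a ca + Pi.single b cb + Pi.single c cc + Pi.single d cd' with hx
  have hxa : x a = ca := by
    simp [hx, Pi.single_eq_of_ne hab, Pi.single_eq_of_ne hac, Pi.single_eq_of_ne had]
  have hxb : x b = cb := by
    simp [hx, Pi.single_eq_of_ne hab.symm, Pi.single_eq_of_ne hbc, Pi.single_eq_of_ne hbd]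
  have hxc : x c = cc := by
    simp [hx, Pi.single_eq_of_ne hac.symm, Pi.single_eq_of_ne hbc.symm, Pi.single_eq_of_ne hcd]
  have hxd : x d = cd' := by
    simp [hx, Pi.single_eq_of_ne had.symm, Pi.single_eq_of_ne hbd.symm, Pi.single_eq_of_ne hcd.symm]
  have hmv : ∀ i, (distMatrix G).mulVec x i
      = distMatrix G i a * ca + distMatrix G i b * cb + distMatrix G i c * cc
        + distMatrix G i d * cd' := by
    intro i
    rw [hx, Matrix.mulVec_add, Matrix.mulVec_add, Matrix.mulVec_add, Pi.add_apply, Pi.add_apply,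
      Pi.add_apply, Matrix.mulVec_single, Matrix.mulVec_single, Matrix.mulVec_single,
      Matrix.mulVec_single]
    rfl
  refine p17_mk _ _ x (p17_dm_nn G) ?_ ?_ hlam ?_
  · intro i
    rcases eq_or_ne i a with h | h
    · subst h; rw [hxa]; exact ha.le
    rcases eq_or_ne i b with h' | h'
    · subst h'; rw [hxb]; exact hb.le
    rcases eq_or_ne i c with h'' | h''
    · subst h''; rw [hxc]; exact hc.le
    rcases eq_or_ne i d with h''' | h'''
    · subst h'''; rw [hxd]; exact hd.le
    · simp [hx, Pi.single_eq_of_ne h, Pi.single_eq_of_ne h', Pi.single_eq_of_ne h'',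
        Pi.single_eq_of_ne h''']
  · intro h
    have := congrFun h a
    rw [hxa] at this; simp at this; exact ha.ne' this
  · intro i hi
    have : i = a ∨ i = b ∨ i = c ∨ i = d := by
      by_contra h
      push_neg at h
      exact hi (by simp [hx, Pi.single_eq_of_ne h.1, Pi.single_eq_of_ne h.2.1,
        Pi.single_eq_of_ne h.2.2.1, Pi.single_eq_of_ne h.2.2.2])
    rcases this with h | h | h | h
    · rw [h, hmv, hxa, p17_dm_self, p17_dm, p17_dm, p17_dm]
      linarith [e1]
    · rw [h, hmv, hxb, p17_dm_self, p17_dm_sym G b a, p17_dm, p17_dm, p17_dm]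
      linarith [e2]
    · rw [h, hmv, hxc, p17_dm_self, p17_dm_sym G c a, p17_dm_sym G c b, p17_dm, p17_dm, p17_dm]
      linarith [e3]
    · rw [h, hmv, hxd, p17_dm_self, p17_dm_sym G d a, p17_dm_sym G d b, p17_dm_sym G d c, p17_dm, p17_dm, p17_dm]
      linarith [e4]

lemma p17_penult {n : ℕ} {G : SimpleGraph (Fin n)} (hG : G.Connected) {u w : Fin n} {k : ℕ}
    (h : G.dist u w = k + 1) : ∃ v, G.Adj u v ∧ G.dist v w = k := by
  obtain ⟨p, hp⟩ := (hG.preconnected u w).exists_walk_length_eq_dist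
  rw [h] at hp
  cases p with
  | nil => simp at hp
  | @cons _ v _ hadj q =>
    refine ⟨v, hadj, ?_⟩
    have hq : q.length = k := by simpa using hp
    have h1 : G.dist v w ≤ k := hq ▸ SimpleGraph.dist_le q
    have h2 : G.dist u w ≤ G.dist u v + G.dist v w := hG.dist_triangle
    have h3 : G.dist u v = 1 := SimpleGraph.dist_eq_one_iff_adj.mpr hadj
    omega

lemma p17_realize {n : ℕ} {G : SimpleGraph (Fin n)} (hG : G.Connected) :
    ∀ d k (u w : Fin n), G.dist u w = d → k ≤ d → ∃ a b : Fin n, G.dist a b = k := by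
  intro d
  induction d with
  | zero =>
    intro k u w _ hk
    interval_cases k
    exact ⟨u, u, SimpleGraph.dist_self⟩
  | succ m ih =>
    intro k u w hd hk
    rcases Nat.eq_or_lt_of_le hk with he | hlt
    · exact ⟨u, w, he ▸ hd⟩
    · obtain ⟨v, _, hv⟩ := p17_penult hG hd
      exact ih k v w hv (by omega)

/-- Lower bound on a Pareto eigenvalue via an indicator test vector. -/
lemma p17_lower {n : ℕ} {G : SimpleGraph (Fin n)} {lam : ℝ} {x : Fin n → ℝ}
    (hp : IsParetoEigenpair (distMatrix G) lam x) (J : Finset (Fin n))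
    (hJ : ∀ i ∈ J, x i ≠ 0) :
    (∑ i ∈ J, ∑ j ∈ J, (G.dist i j : ℝ)) ≤ lam * J.card := by
  obtain ⟨heq, hlam, _, _⟩ := p17_elim (p17_dm_nn G) hp
  have hx : ∀ i, 0 ≤ x i := hp.2.1
  set z : Fin n → ℝ := fun i => if i ∈ J then 1 else 0 with hz
  have hzn : ∀ i, 0 ≤ z i := by intro i; rw [hz]; dsimp; split <;> norm_num
  have hzsupp : ∀ i, z i ≠ 0 → x i ≠ 0 := by
    intro i hzi
    rw [hz] at hzi; dsimp at hzi
    by_cases h : i ∈ J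
    · exact hJ i h
    · simp [h] at hzi
  have hb := p17_rayleigh (p17_dm_nn G) (p17_dm_sym G) hx heq z hzn hzsupp
  have e1 : z ⬝ᵥ (distMatrix G).mulVec z = ∑ i ∈ J, ∑ j ∈ J, (G.dist i j : ℝ) := by
    rw [p17_dp]
    have : ∀ i, z i * (distMatrix G).mulVec z i
        = if i ∈ J then ∑ j ∈ J, (G.dist i j : ℝ) else 0 := by
      intro i
      rw [p17_mv]
      have inner : ∑ j, distMatrix G i j * z j = ∑ j ∈ J, (G.dist i j : ℝ) := by
        rw [hz]
        simp only [mul_ite, mul_one, mul_zero]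
        rw [Finset.sum_ite_mem, Finset.univ_inter]
        rfl
      rw [inner, hz]
      dsimp
      split <;> simp
    rw [Finset.sum_congr rfl fun i _ => this i, Finset.sum_ite_mem, Finset.univ_inter]
  have e2 : z ⬝ᵥ z = (J.card : ℝ) := by
    rw [p17_dp, hz]
    simp only [ite_mul, one_mul, zero_mul]
    rw [Finset.sum_ite_mem, Finset.univ_inter]
    simp
  rw [e1, e2] at hb
  exact hb

/-- Upper bound on a Pareto eigenvalue via a dominating matrix with known eigenpair. -/
lemma p17_upper {n : ℕ} {G : SimpleGraph (Fin n)} {lam mu : ℝ} {x w : Fin n → ℝ}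
    (hp : IsParetoEigenpair (distMatrix G) lam x)
    (hw : ∀ i, 0 ≤ w i)
    (B : Matrix (Fin n) (Fin n) ℝ) (hB : ∀ i j, 0 ≤ B i j) (hBs : ∀ i j, B i j = B j i)
    (hBeq : ∀ i, w i ≠ 0 → B.mulVec w i = mu * w i)
    (hsupp : ∀ i, x i ≠ 0 → w i ≠ 0)
    (hdom : ∀ i j, x i ≠ 0 → x j ≠ 0 → distMatrix G i j ≤ B i j) :
    lam ≤ mu := by
  obtain ⟨heq, hlam, hnum, hxx⟩ := p17_elim (p17_dm_nn G) hp
  have hx : ∀ i, 0 ≤ x i := hp.2.1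
  have h1 : x ⬝ᵥ (distMatrix G).mulVec x ≤ x ⬝ᵥ B.mulVec x := by
    rw [p17_dp, p17_dp]
    refine Finset.sum_le_sum fun i _ => ?_
    rw [p17_mv, p17_mv, Finset.mul_sum, Finset.mul_sum]
    refine Finset.sum_le_sum fun j _ => ?_
    rcases eq_or_ne (x i) 0 with h | h
    · rw [h]; ring_nf; rfl
    rcases eq_or_ne (x j) 0 with h' | h'
    · rw [h']; ring_nf; rfl
    · have := hdom i j h h'
      have hxi := (hx i).lt_of_ne' h
      have hxj := (hx j).lt_of_ne' h'
      nlinarith [mul_le_mul_of_nonneg_right (mul_le_mul_of_nonneg_left this hxi.le) hxj.le]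
  have h2 : x ⬝ᵥ B.mulVec x ≤ mu * (x ⬝ᵥ x) :=
    p17_rayleigh hB hBs hw hBeq x hx hsupp
  rw [hnum] at h1
  have := le_trans h1 h2
  exact le_of_mul_le_mul_right (by linarith [this]) hxx

lemma p17_upper_pair {n : ℕ} {G : SimpleGraph (Fin n)} {lam : ℝ} {x : Fin n → ℝ}
    (hp : IsParetoEigenpair (distMatrix G) lam x) {a b : Fin n} (hab : a ≠ b)
    (hsupp : ∀ i, x i ≠ 0 → i = a ∨ i = b) (hd2 : G.dist a b ≤ 2) : lam ≤ 2 := by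
  have hd2' : (G.dist a b : ℝ) ≤ 2 := by exact_mod_cast hd2
  have hd2'' : (G.dist b a : ℝ) ≤ 2 := by rw [SimpleGraph.dist_comm]; exact hd2'
  set B : Matrix (Fin n) (Fin n) ℝ :=
    fun i j => if (i = a ∨ i = b) ∧ (j = a ∨ j = b) ∧ i ≠ j then 2 else 0 with hBdef
  set w : Fin n → ℝ := Pi.single a 1 + Pi.single b 1 with hwdef
  have hwa : w a = 1 := by simp [hwdef, Pi.single_eq_of_ne hab]
  have hwb : w b = 1 := by simp [hwdef, Pi.single_eq_of_ne hab.symm]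
  have hw : ∀ i, 0 ≤ w i := by
    intro i
    rcases eq_or_ne i a with h | h
    · rw [h, hwa]; norm_num
    rcases eq_or_ne i b with h' | h'
    · rw [h', hwb]; norm_num
    · simp [hwdef, Pi.single_eq_of_ne h, Pi.single_eq_of_ne h']
  have hmv : ∀ i, B.mulVec w i = B i a * 1 + B i b * 1 := by
    intro i
    rw [hwdef, Matrix.mulVec_add, Pi.add_apply, Matrix.mulVec_single, Matrix.mulVec_single]
    rfl
  refine p17_upper hp hw B (fun i j => ?_) (fun i j => ?_) (fun i hi => ?_) (fun i hi => ?_)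
    (fun i j hi hj => ?_)
  · rw [hBdef]; dsimp only; split <;> norm_num
  · simp only [hBdef]
    by_cases hc : (i = a ∨ i = b) ∧ (j = a ∨ j = b) ∧ i ≠ j
    · rw [if_pos hc, if_pos (by tauto)]
    · rw [if_neg hc, if_neg (show ¬((j = a ∨ j = b) ∧ (i = a ∨ i = b) ∧ j ≠ i) by tauto)]
  · have hiab : i = a ∨ i = b := by
      by_contra h
      push_neg at h
      exact hi (by simp [hwdef, Pi.single_eq_of_ne h.1, Pi.single_eq_of_ne h.2])
    rcases hiab with h | h
    · rw [h, hmv, hwa]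
      have e1 : B a a = 0 := by simp [hBdef]
      have e2 : B a b = 2 := by simp [hBdef, hab]
      rw [e1, e2]; ring
    · rw [h, hmv, hwb]
      have e1 : B b b = 0 := by simp [hBdef]
      have e2 : B b a = 2 := by simp [hBdef, hab.symm]
      rw [e1, e2]; ring
  · rcases hsupp i hi with h | h
    · rw [h, hwa]; norm_num
    · rw [h, hwb]; norm_num
  · rcases eq_or_ne i j with h | h
    · subst h
      rw [p17_dm_self, hBdef]; dsimp only; split <;> norm_num
    · have hBij : B i j = 2 := by
        rw [hBdef]; dsimp only
        rw [if_pos ⟨hsupp i hi, hsupp j hj, h⟩]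
      rw [hBij, p17_dm]
      rcases hsupp i hi with h1 | h1 <;> rcases hsupp j hj with h2 | h2
      · exact absurd (h1.trans h2.symm) h
      · rw [h1, h2]; exact hd2'
      · rw [h1, h2]; exact hd2''
      · exact absurd (h1.trans h2.symm) h

lemma p17_upper_triple {n : ℕ} {G : SimpleGraph (Fin n)} {lam : ℝ} {x : Fin n → ℝ}
    (hp : IsParetoEigenpair (distMatrix G) lam x) {a b m : Fin n}
    (hab : a ≠ b) (ham : a ≠ m) (hbm : b ≠ m)
    (hsupp : ∀ i, x i ≠ 0 → i = a ∨ i = b ∨ i = m)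
    (hd2 : G.dist a b ≤ 2) (h1a : G.dist a m = 1) (h1b : G.dist b m = 1) :
    lam ≤ 1 + Real.sqrt 3 := by
  have h3 : Real.sqrt 3 * Real.sqrt 3 = 3 := Real.mul_self_sqrt (by norm_num)
  have h3a : 1 < Real.sqrt 3 := by nlinarith [Real.sqrt_nonneg 3]
  have hd2' : (G.dist a b : ℝ) ≤ 2 := by exact_mod_cast hd2
  have hd2'' : (G.dist b a : ℝ) ≤ 2 := by rw [SimpleGraph.dist_comm]; exact hd2'
  have h1a' : (G.dist a m : ℝ) = 1 := by exact_mod_cast h1a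
  have h1a'' : (G.dist m a : ℝ) = 1 := by rw [SimpleGraph.dist_comm]; exact h1a'
  have h1b' : (G.dist b m : ℝ) = 1 := by exact_mod_cast h1b
  have h1b'' : (G.dist m b : ℝ) = 1 := by rw [SimpleGraph.dist_comm]; exact h1b'
  set B : Matrix (Fin n) (Fin n) ℝ :=
    fun i j => if (i = a ∧ j = b) ∨ (i = b ∧ j = a) then 2
      else if (i = a ∨ i = b ∨ i = m) ∧ (j = a ∨ j = b ∨ j = m) ∧ i ≠ j then 1 else 0 with hBdef
  set w : Fin n → ℝ := Pi.single a 1 + Pi.single b 1 + Pi.single m (Real.sqrt 3 - 1) with hwdef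
  have hwa : w a = 1 := by simp [hwdef, Pi.single_eq_of_ne hab, Pi.single_eq_of_ne ham]
  have hwb : w b = 1 := by simp [hwdef, Pi.single_eq_of_ne hab.symm, Pi.single_eq_of_ne hbm]
  have hwm : w m = Real.sqrt 3 - 1 := by
    simp [hwdef, Pi.single_eq_of_ne ham.symm, Pi.single_eq_of_ne hbm.symm]
  have hw : ∀ i, 0 ≤ w i := by
    intro i
    rcases eq_or_ne i a with h | h
    · rw [h, hwa]; norm_num
    rcases eq_or_ne i b with h' | h'
    · rw [h', hwb]; norm_num
    rcases eq_or_ne i m with h'' | h''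
    · rw [h'', hwm]; linarith
    · simp [hwdef, Pi.single_eq_of_ne h, Pi.single_eq_of_ne h', Pi.single_eq_of_ne h'']
  have hmv : ∀ i, B.mulVec w i = B i a * 1 + B i b * 1 + B i m * (Real.sqrt 3 - 1) := by
    intro i
    rw [hwdef, Matrix.mulVec_add, Matrix.mulVec_add, Pi.add_apply, Pi.add_apply,
      Matrix.mulVec_single, Matrix.mulVec_single, Matrix.mulVec_single]
    rfl
  refine p17_upper hp hw B (fun i j => ?_) (fun i j => ?_) (fun i hi => ?_) (fun i hi => ?_)
    (fun i j hi hj => ?_)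
  · rw [hBdef]; dsimp only; split
    · norm_num
    · split <;> norm_num
  · simp only [hBdef]
    by_cases c1 : (i = a ∧ j = b) ∨ (i = b ∧ j = a)
    · rw [if_pos c1, if_pos (by tauto)]
    · rw [if_neg c1, if_neg (show ¬((j = a ∧ i = b) ∨ (j = b ∧ i = a)) by tauto)]
      by_cases c2 : (i = a ∨ i = b ∨ i = m) ∧ (j = a ∨ j = b ∨ j = m) ∧ i ≠ j
      · rw [if_pos c2, if_pos (by tauto)]
      · rw [if_neg c2, if_neg (show ¬((j = a ∨ j = b ∨ j = m) ∧ (i = a ∨ i = b ∨ i = m) ∧ j ≠ i) by tauto)]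
  · have him : i = a ∨ i = b ∨ i = m := by
      by_contra h
      push_neg at h
      exact hi (by simp [hwdef, Pi.single_eq_of_ne h.1, Pi.single_eq_of_ne h.2.1,
        Pi.single_eq_of_ne h.2.2])
    rcases him with h | h | h
    · rw [h, hmv, hwa]
      have e1 : B a a = 0 := by simp [hBdef, hab, hab.symm]
      have e2 : B a b = 2 := by simp [hBdef]
      have e3 : B a m = 1 := by simp [hBdef, Ne.symm hbm, hab, ham]
      rw [e1, e2, e3]; ring
    · rw [h, hmv, hwb]
      have e1 : B b b = 0 := by simp [hBdef, hab, hab.symm]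
      have e2 : B b a = 2 := by simp [hBdef]
      have e3 : B b m = 1 := by simp [hBdef, Ne.symm ham, hab.symm, hbm]
      rw [e1, e2, e3]; ring
    · rw [h, hmv, hwm]
      have e1 : B m m = 0 := by simp [hBdef, Ne.symm ham, Ne.symm hbm]
      have e2 : B m a = 1 := by simp [hBdef, Ne.symm ham, Ne.symm hbm, hab.symm]
      have e3 : B m b = 1 := by simp [hBdef, Ne.symm ham, Ne.symm hbm, hab]
      rw [e1, e2, e3]
      linear_combination -h3
  · rcases hsupp i hi with h | h | h
    · rw [h, hwa]; norm_num
    · rw [h, hwb]; norm_num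
    · rw [h, hwm]; intro hc; linarith
  · rcases eq_or_ne i j with h | h
    · subst h
      rw [p17_dm_self, hBdef]; dsimp only; split
      · norm_num
      · split <;> norm_num
    · rw [p17_dm]
      rcases hsupp i hi with h1 | h1 | h1 <;> rcases hsupp j hj with h2 | h2 | h2
      · exact absurd (h1.trans h2.symm) h
      · have e : B a b = 2 := by simp [hBdef]
        rw [h1, h2, e]; exact hd2'
      · have e : B a m = 1 := by simp [hBdef, Ne.symm hbm, hab, ham]
        rw [h1, h2, e, h1a']
      · have e : B b a = 2 := by simp [hBdef]
        rw [h1, h2, e]; exact hd2''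
      · exact absurd (h1.trans h2.symm) h
      · have e : B b m = 1 := by simp [hBdef, Ne.symm ham, hab.symm, hbm]
        rw [h1, h2, e, h1b']
      · have e : B m a = 1 := by simp [hBdef, Ne.symm ham, Ne.symm hbm, hab.symm]
        rw [h1, h2, e, h1a'']
      · have e : B m b = 1 := by simp [hBdef, Ne.symm ham, Ne.symm hbm, hab]
        rw [h1, h2, e, h1b'']
      · exact absurd (h1.trans h2.symm) h

lemma p17_upper_quad {n : ℕ} {G : SimpleGraph (Fin n)} {lam : ℝ} {x : Fin n → ℝ}
    (hp : IsParetoEigenpair (distMatrix G) lam x) {a b r s : Fin n}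
    (hab : a ≠ b) (har : a ≠ r) (has : a ≠ s) (hbr : b ≠ r) (hbs : b ≠ s) (hrs : r ≠ s)
    (hsupp : ∀ i, x i ≠ 0 → i = a ∨ i = b ∨ i = r ∨ i = s)
    (hd2 : G.dist a b ≤ 2) (e_ar : G.dist a r = 1) (e_as : G.dist a s = 1)
    (e_br : G.dist b r = 1) (e_bs : G.dist b s = 1) (e_rs : G.dist r s = 1) :
    lam ≤ (3 + Real.sqrt 17) / 2 := by
  have h17 : Real.sqrt 17 * Real.sqrt 17 = 17 := Real.mul_self_sqrt (by norm_num)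
  have h17a : 1 < Real.sqrt 17 := by nlinarith [Real.sqrt_nonneg 17]
  have hd2' : (G.dist a b : ℝ) ≤ 2 := by exact_mod_cast hd2
  have hd2'' : (G.dist b a : ℝ) ≤ 2 := by rw [SimpleGraph.dist_comm]; exact hd2'
  have f_ar : (G.dist a r : ℝ) = 1 := by exact_mod_cast e_ar
  have f_ra : (G.dist r a : ℝ) = 1 := by rw [SimpleGraph.dist_comm]; exact f_ar
  have f_as : (G.dist a s : ℝ) = 1 := by exact_mod_cast e_as
  have f_sa : (G.dist s a : ℝ) = 1 := by rw [SimpleGraph.dist_comm]; exact f_as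
  have f_br : (G.dist b r : ℝ) = 1 := by exact_mod_cast e_br
  have f_rb : (G.dist r b : ℝ) = 1 := by rw [SimpleGraph.dist_comm]; exact f_br
  have f_bs : (G.dist b s : ℝ) = 1 := by exact_mod_cast e_bs
  have f_sb : (G.dist s b : ℝ) = 1 := by rw [SimpleGraph.dist_comm]; exact f_bs
  have f_rs : (G.dist r s : ℝ) = 1 := by exact_mod_cast e_rs
  have f_sr : (G.dist s r : ℝ) = 1 := by rw [SimpleGraph.dist_comm]; exact f_rs
  set B : Matrix (Fin n) (Fin n) ℝ :=
    fun i j => if (i = a ∧ j = b) ∨ (i = b ∧ j = a) then 2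
      else if (i = a ∨ i = b ∨ i = r ∨ i = s) ∧ (j = a ∨ j = b ∨ j = r ∨ j = s) ∧ i ≠ j
        then 1 else 0 with hBdef
  set t : ℝ := (Real.sqrt 17 - 1) / 4 with htdef
  have ht : 0 < t := by rw [htdef]; linarith
  set w : Fin n → ℝ := Pi.single a 1 + Pi.single b 1 + Pi.single r t + Pi.single s t with hwdef
  have hwa : w a = 1 := by
    simp [hwdef, Pi.single_eq_of_ne hab, Pi.single_eq_of_ne har, Pi.single_eq_of_ne has]
  have hwb : w b = 1 := by
    simp [hwdef, Pi.single_eq_of_ne hab.symm, Pi.single_eq_of_ne hbr, Pi.single_eq_of_ne hbs]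
  have hwr : w r = t := by
    simp [hwdef, Pi.single_eq_of_ne har.symm, Pi.single_eq_of_ne hbr.symm,
      Pi.single_eq_of_ne hrs]
  have hws : w s = t := by
    simp [hwdef, Pi.single_eq_of_ne has.symm, Pi.single_eq_of_ne hbs.symm,
      Pi.single_eq_of_ne hrs.symm]
  have hw : ∀ i, 0 ≤ w i := by
    intro i
    rcases eq_or_ne i a with h | h
    · rw [h, hwa]; norm_num
    rcases eq_or_ne i b with h' | h'
    · rw [h', hwb]; norm_num
    rcases eq_or_ne i r with h'' | h''
    · rw [h'', hwr]; exact ht.le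
    rcases eq_or_ne i s with h''' | h'''
    · rw [h''', hws]; exact ht.le
    · simp [hwdef, Pi.single_eq_of_ne h, Pi.single_eq_of_ne h', Pi.single_eq_of_ne h'',
        Pi.single_eq_of_ne h''']
  have hmv : ∀ i, B.mulVec w i = B i a * 1 + B i b * 1 + B i r * t + B i s * t := by
    intro i
    rw [hwdef, Matrix.mulVec_add, Matrix.mulVec_add, Matrix.mulVec_add, Pi.add_apply,
      Pi.add_apply, Pi.add_apply, Matrix.mulVec_single, Matrix.mulVec_single,
      Matrix.mulVec_single, Matrix.mulVec_single]
    rfl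
  refine p17_upper hp hw B (fun i j => ?_) (fun i j => ?_) (fun i hi => ?_) (fun i hi => ?_)
    (fun i j hi hj => ?_)
  · rw [hBdef]; dsimp only; split
    · norm_num
    · split <;> norm_num
  · simp only [hBdef]
    by_cases c1 : (i = a ∧ j = b) ∨ (i = b ∧ j = a)
    · rw [if_pos c1, if_pos (show (j = a ∧ i = b) ∨ (j = b ∧ i = a) by
        rcases c1 with ⟨u, v⟩ | ⟨u, v⟩
        exacts [Or.inr ⟨v, u⟩, Or.inl ⟨v, u⟩])]
    · rw [if_neg c1, if_neg (show ¬((j = a ∧ i = b) ∨ (j = b ∧ i = a)) by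
        rintro (⟨u, v⟩ | ⟨u, v⟩)
        exacts [c1 (Or.inr ⟨v, u⟩), c1 (Or.inl ⟨v, u⟩)])]
      by_cases c2 : (i = a ∨ i = b ∨ i = r ∨ i = s) ∧ (j = a ∨ j = b ∨ j = r ∨ j = s) ∧ i ≠ j
      · rw [if_pos c2, if_pos (show (j = a ∨ j = b ∨ j = r ∨ j = s) ∧
          (i = a ∨ i = b ∨ i = r ∨ i = s) ∧ j ≠ i from ⟨c2.2.1, c2.1, Ne.symm c2.2.2⟩)]
      · rw [if_neg c2, if_neg (show ¬((j = a ∨ j = b ∨ j = r ∨ j = s) ∧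
          (i = a ∨ i = b ∨ i = r ∨ i = s) ∧ j ≠ i) by
          rintro ⟨u, v, ne⟩
          exact c2 ⟨v, u, Ne.symm ne⟩)]
  · have him : i = a ∨ i = b ∨ i = r ∨ i = s := by
      by_contra h
      push_neg at h
      exact hi (by simp [hwdef, Pi.single_eq_of_ne h.1, Pi.single_eq_of_ne h.2.1,
        Pi.single_eq_of_ne h.2.2.1, Pi.single_eq_of_ne h.2.2.2])
    rcases him with h | h | h | h
    · rw [h, hmv, hwa]
      have e1 : B a a = 0 := by simp [hBdef, hab, hab.symm]
      have e2 : B a b = 2 := by simp [hBdef]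
      have e3 : B a r = 1 := by simp [hBdef, Ne.symm hbr, hab, har]
      have e4 : B a s = 1 := by simp [hBdef, Ne.symm hbs, hab, has]
      rw [e1, e2, e3, e4, htdef]; ring
    · rw [h, hmv, hwb]
      have e1 : B b b = 0 := by simp [hBdef, hab, hab.symm]
      have e2 : B b a = 2 := by simp [hBdef]
      have e3 : B b r = 1 := by simp [hBdef, Ne.symm har, hab.symm, hbr]
      have e4 : B b s = 1 := by simp [hBdef, Ne.symm has, hab.symm, hbs]
      rw [e1, e2, e3, e4, htdef]; ring
    · rw [h, hmv, hwr]
      have e1 : B r r = 0 := by simp [hBdef, Ne.symm har, Ne.symm hbr]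
      have e2 : B r a = 1 := by simp [hBdef, Ne.symm har, Ne.symm hbr, hab.symm]
      have e3 : B r b = 1 := by simp [hBdef, Ne.symm har, Ne.symm hbr, hab]
      have e4 : B r s = 1 := by simp [hBdef, Ne.symm har, Ne.symm hbr, hrs, Ne.symm has,
          Ne.symm hbs]
      rw [e1, e2, e3, e4, htdef]
      linear_combination (-(1:ℝ)/8) * h17
    · rw [h, hmv, hws]
      have e1 : B s s = 0 := by simp [hBdef, Ne.symm has, Ne.symm hbs]
      have e2 : B s a = 1 := by simp [hBdef, Ne.symm has, Ne.symm hbs, hab.symm]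
      have e3 : B s b = 1 := by simp [hBdef, Ne.symm has, Ne.symm hbs, hab]
      have e4 : B s r = 1 := by simp [hBdef, Ne.symm has, Ne.symm hbs, hrs.symm, Ne.symm har,
          Ne.symm hbr]
      rw [e1, e2, e3, e4, htdef]
      linear_combination (-(1:ℝ)/8) * h17
  · rcases hsupp i hi with h | h | h | h
    · rw [h, hwa]; norm_num
    · rw [h, hwb]; norm_num
    · rw [h, hwr]; exact ht.ne'
    · rw [h, hws]; exact ht.ne'
  · rcases eq_or_ne i j with h | h
    · subst h
      rw [p17_dm_self, hBdef]; dsimp only; split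
      · norm_num
      · split <;> norm_num
    · rw [p17_dm]
      rcases hsupp i hi with h1 | h1 | h1 | h1 <;> rcases hsupp j hj with h2 | h2 | h2 | h2
      · exact absurd (h1.trans h2.symm) h
      · have e : B a b = 2 := by simp [hBdef]
        rw [h1, h2, e]; exact hd2'
      · have e : B a r = 1 := by simp [hBdef, Ne.symm hbr, hab, har]
        rw [h1, h2, e, f_ar]
      · have e : B a s = 1 := by simp [hBdef, Ne.symm hbs, hab, has]
        rw [h1, h2, e, f_as]
      · have e : B b a = 2 := by simp [hBdef]
        rw [h1, h2, e]; exact hd2''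
      · exact absurd (h1.trans h2.symm) h
      · have e : B b r = 1 := by simp [hBdef, Ne.symm har, hab.symm, hbr]
        rw [h1, h2, e, f_br]
      · have e : B b s = 1 := by simp [hBdef, Ne.symm has, hab.symm, hbs]
        rw [h1, h2, e, f_bs]
      · have e : B r a = 1 := by simp [hBdef, Ne.symm har, Ne.symm hbr, hab.symm]
        rw [h1, h2, e, f_ra]
      · have e : B r b = 1 := by simp [hBdef, Ne.symm har, Ne.symm hbr, hab]
        rw [h1, h2, e, f_rb]
      · exact absurd (h1.trans h2.symm) h
      · have e : B r s = 1 := by simp [hBdef, Ne.symm har, Ne.symm hbr, hrs, Ne.symm has,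
            Ne.symm hbs]
        rw [h1, h2, e, f_rs]
      · have e : B s a = 1 := by simp [hBdef, Ne.symm has, Ne.symm hbs, hab.symm]
        rw [h1, h2, e, f_sa]
      · have e : B s b = 1 := by simp [hBdef, Ne.symm has, Ne.symm hbs, hab]
        rw [h1, h2, e, f_sb]
      · have e : B s r = 1 := by simp [hBdef, Ne.symm has, Ne.symm hbs, hrs.symm, Ne.symm har,
            Ne.symm hbr]
        rw [h1, h2, e, f_sr]
      · exact absurd (h1.trans h2.symm) h

lemma p17_base_sum {n : ℕ} (J : Finset (Fin n)) :
    ∑ i ∈ J, ∑ j ∈ J, (if i = j then (0:ℝ) else 1) = (J.card : ℝ) * ((J.card : ℝ) - 1) := by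
  have inner : ∀ i ∈ J, ∑ j ∈ J, (if i = j then (0:ℝ) else 1) = (J.card : ℝ) - 1 := by
    intro i hi
    have step : ∀ j ∈ J, (if i = j then (0:ℝ) else 1) = 1 - (if i = j then (1:ℝ) else 0) := by
      intro j _; split <;> norm_num
    rw [Finset.sum_congr rfl step, Finset.sum_sub_distrib, Finset.sum_const,
      Finset.sum_ite_eq J i (fun _ => (1:ℝ)), if_pos hi]
    simp
  rw [Finset.sum_congr rfl inner, Finset.sum_const, nsmul_eq_mul]

lemma p17_term {n : ℕ} {G : SimpleGraph (Fin n)} (hG : G.Connected) (i j : Fin n) :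
    (if i = j then (0:ℝ) else 1) ≤ (G.dist i j : ℝ) := by
  rcases eq_or_ne i j with h | h
  · subst h; simp
  · have := hG.pos_dist_of_ne h
    rw [if_neg h]
    exact_mod_cast this

lemma p17_sum_ge {n : ℕ} {G : SimpleGraph (Fin n)} (hG : G.Connected) (J : Finset (Fin n)) :
    (J.card : ℝ) * ((J.card : ℝ) - 1) ≤ ∑ i ∈ J, ∑ j ∈ J, (G.dist i j : ℝ) := by
  rw [← p17_base_sum J]
  exact Finset.sum_le_sum fun i _ => Finset.sum_le_sum fun j _ => p17_term hG i j

lemma p17_sum_excess {n : ℕ} {G : SimpleGraph (Fin n)} (hG : G.Connected) (J : Finset (Fin n))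
    (S : Finset (Fin n × Fin n)) (hS : S ⊆ J ×ˢ J) :
    (J.card : ℝ) * ((J.card : ℝ) - 1)
      + ∑ p ∈ S, ((G.dist p.1 p.2 : ℝ) - (if p.1 = p.2 then (0:ℝ) else 1))
    ≤ ∑ i ∈ J, ∑ j ∈ J, (G.dist i j : ℝ) := by
  have e1 : ∑ i ∈ J, ∑ j ∈ J, (G.dist i j : ℝ)
      = ∑ p ∈ J ×ˢ J, (G.dist p.1 p.2 : ℝ) := (Finset.sum_product' _ _ _).symm
  have e2 : ∑ i ∈ J, ∑ j ∈ J, (if i = j then (0:ℝ) else 1)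
      = ∑ p ∈ J ×ˢ J, (if p.1 = p.2 then (0:ℝ) else 1) := (Finset.sum_product' _ _ _).symm
  have e3 : ∑ p ∈ S, ((G.dist p.1 p.2 : ℝ) - (if p.1 = p.2 then (0:ℝ) else 1))
      ≤ ∑ p ∈ J ×ˢ J, ((G.dist p.1 p.2 : ℝ) - (if p.1 = p.2 then (0:ℝ) else 1)) := by
    refine Finset.sum_le_sum_of_subset_of_nonneg hS fun p _ _ => ?_
    have := p17_term hG p.1 p.2
    linarith
  have e4 : ∑ p ∈ J ×ˢ J, ((G.dist p.1 p.2 : ℝ) - (if p.1 = p.2 then (0:ℝ) else 1))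
      = (∑ p ∈ J ×ˢ J, (G.dist p.1 p.2 : ℝ))
        - ∑ p ∈ J ×ˢ J, (if p.1 = p.2 then (0:ℝ) else 1) := by rw [Finset.sum_sub_distrib]
  rw [e1]
  have := p17_base_sum J
  rw [e2] at this
  linarith [e3, e4.le, e4.ge]

lemma p17_sum_pair {n : ℕ} {G : SimpleGraph (Fin n)} (hG : G.Connected) {J : Finset (Fin n)}
    {a b : Fin n} (ha : a ∈ J) (hb : b ∈ J) (hab : a ≠ b) (hd : G.dist a b = 2) :
    (J.card : ℝ) * ((J.card : ℝ) - 1) + 2 ≤ ∑ i ∈ J, ∑ j ∈ J, (G.dist i j : ℝ) := by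
  have hd' : G.dist b a = 2 := by rw [SimpleGraph.dist_comm]; exact hd
  have hne : ((a, b) : Fin n × Fin n) ≠ (b, a) := by
    intro h; exact hab (congrArg Prod.fst h)
  have hmem : ∀ p ∈ ({(a, b), (b, a)} : Finset (Fin n × Fin n)), p ∈ J ×ˢ J := by
    intro p hp
    simp only [Finset.mem_insert, Finset.mem_singleton] at hp
    rcases hp with h | h <;> subst h <;> exact Finset.mem_product.mpr ⟨by assumption, by assumption⟩
  have key := p17_sum_excess hG J {(a, b), (b, a)} hmem
  have hsum : ∑ p ∈ ({(a, b), (b, a)} : Finset (Fin n × Fin n)),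
      ((G.dist p.1 p.2 : ℝ) - (if p.1 = p.2 then (0:ℝ) else 1)) = 2 := by
    rw [Finset.sum_insert (by simp [hne]), Finset.sum_singleton]
    simp only [hd, hd', if_neg hab, if_neg hab.symm]
    norm_num
  rw [hsum] at key
  exact key

lemma p17_sum_2pairs {n : ℕ} {G : SimpleGraph (Fin n)} (hG : G.Connected) {J : Finset (Fin n)}
    {a b c d : Fin n} (ha : a ∈ J) (hb : b ∈ J) (hc : c ∈ J) (hd : d ∈ J)
    (hab : a ≠ b) (hcd : c ≠ d) (h1 : ¬(a = c ∧ b = d)) (h2 : ¬(a = d ∧ b = c))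
    (dab : G.dist a b = 2) (dcd : G.dist c d = 2) :
    (J.card : ℝ) * ((J.card : ℝ) - 1) + 4 ≤ ∑ i ∈ J, ∑ j ∈ J, (G.dist i j : ℝ) := by
  have dba : G.dist b a = 2 := by rw [SimpleGraph.dist_comm]; exact dab
  have ddc : G.dist d c = 2 := by rw [SimpleGraph.dist_comm]; exact dcd
  set S : Finset (Fin n × Fin n) := {(a, b), (b, a), (c, d), (d, c)} with hSdef
  have hmem : ∀ p ∈ S, p ∈ J ×ˢ J := by
    intro p hp
    simp only [hSdef, Finset.mem_insert, Finset.mem_singleton] at hp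
    rcases hp with h | h | h | h <;> subst h <;>
      exact Finset.mem_product.mpr ⟨by assumption, by assumption⟩
  have key := p17_sum_excess hG J S hmem
  have n1 : ((a, b) : Fin n × Fin n) ∉ ({(b, a), (c, d), (d, c)} : Finset (Fin n × Fin n)) := by
    simp only [Finset.mem_insert, Finset.mem_singleton, Prod.mk.injEq]
    push_neg
    exact ⟨fun h _ => hab h, fun h h' => h1 ⟨h, h'⟩, fun h h' => h2 ⟨h, h'⟩⟩
  have n2 : ((b, a) : Fin n × Fin n) ∉ ({(c, d), (d, c)} : Finset (Fin n × Fin n)) := by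
    simp only [Finset.mem_insert, Finset.mem_singleton, Prod.mk.injEq]
    push_neg
    exact ⟨fun h h' => h2 ⟨h', h⟩, fun h h' => h1 ⟨h', h⟩⟩
  have n3 : ((c, d) : Fin n × Fin n) ∉ ({(d, c)} : Finset (Fin n × Fin n)) := by
    simp only [Finset.mem_singleton, Prod.mk.injEq]
    push_neg
    intro h h'
    exact absurd h hcd
  have hsum : ∑ p ∈ S,
      ((G.dist p.1 p.2 : ℝ) - (if p.1 = p.2 then (0:ℝ) else 1)) = 4 := by
    rw [hSdef, Finset.sum_insert n1, Finset.sum_insert n2, Finset.sum_insert n3,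
      Finset.sum_singleton]
    simp only [dab, dba, dcd, ddc, if_neg hab, if_neg hab.symm, if_neg hcd, if_neg hcd.symm]
    norm_num
  rw [hsum] at key
  exact key

theorem stmt17 (n : ℕ) (hn : 5 ≤ n) (G : SimpleGraph (Fin n)) (hG : G.Connected)
    (h5 : IsKthSmallest (distParetoSet G) 5 ((3 + Real.sqrt 17) / 2)) :
    IsKthSmallest (distParetoSet G) 6 4 := by
  obtain ⟨hmemA, hcard⟩ := h5
  have h17 : Real.sqrt 17 * Real.sqrt 17 = 17 := Real.mul_self_sqrt (by norm_num)
  have h17a : 4 < Real.sqrt 17 := by nlinarith [Real.sqrt_nonneg 17]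
  have h17b : Real.sqrt 17 < 5 := by nlinarith [Real.sqrt_nonneg 17]
  have h3 : Real.sqrt 3 * Real.sqrt 3 = 3 := Real.mul_self_sqrt (by norm_num)
  have h3a : 1 < Real.sqrt 3 := by nlinarith [Real.sqrt_nonneg 3]
  have h3b : Real.sqrt 3 < 2 := by nlinarith [Real.sqrt_nonneg 3]
  have h33 : Real.sqrt 33 * Real.sqrt 33 = 33 := Real.mul_self_sqrt (by norm_num)
  have h33a : 5 < Real.sqrt 33 := by nlinarith [Real.sqrt_nonneg 33]
  have h33b : Real.sqrt 33 < 6 := by nlinarith [Real.sqrt_nonneg 33]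
  set A : ℝ := (3 + Real.sqrt 17) / 2 with hAdef
  set S' : Set ℝ := {x ∈ distParetoSet G | x < A} with hS'def
  have hcard4 : S'.ncard = 4 := by rw [hS'def]; rw [hcard]
  have hfin : S'.Finite := by
    by_contra h
    have := Set.Infinite.ncard h
    rw [hcard4] at this
    norm_num at this
  -- Step A : there are two vertices at distance 2
  have hex2 : ∃ u w : Fin n, G.dist u w = 2 := by
    by_contra hno
    push_neg at hno
    have hall1 : ∀ i j : Fin n, i ≠ j → G.dist i j = 1 := by
      intro i j hij
      have h1 : 1 ≤ G.dist i j := hG.pos_dist_of_ne hij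
      by_contra hne
      have h2' : 2 ≤ G.dist i j := by omega
      obtain ⟨u, w, huw⟩ := p17_realize hG (G.dist i j) 2 i j rfl h2'
      exact hno u w huw
    obtain ⟨x, hp⟩ := hmemA
    obtain ⟨heq, hlam, _, _⟩ := p17_elim (p17_dm_nn G) hp
    have hx : ∀ i, 0 ≤ x i := hp.2.1
    set F := Finset.univ.filter (fun i => x i ≠ 0) with hFdef
    have hFmem : ∀ i, i ∈ F ↔ x i ≠ 0 := by intro i; simp [hFdef]
    obtain ⟨i0, hi0⟩ := Function.ne_iff.mp hp.1
    have hi0F : i0 ∈ F := (hFmem i0).mpr (by simpa using hi0)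
    set Sx : ℝ := ∑ j, x j with hSx
    have hrow : ∀ i ∈ F, Sx - x i = A * x i := by
      intro i hi
      have hxi : x i ≠ 0 := (hFmem i).mp hi
      have hme := heq i hxi
      rw [p17_mv] at hme
      have hterm : ∀ j, distMatrix G i j * x j = x j - (if j = i then x i else 0) := by
        intro j
        rcases eq_or_ne j i with h | h
        · subst h; rw [p17_dm_self]; simp
        · rcases eq_or_ne (x j) 0 with hxj | hxj
          · rw [hxj]; simp [if_neg h]
          · rw [p17_dm, hall1 i j (Ne.symm h)]
            simp [if_neg h]
      rw [Finset.sum_congr rfl (fun j _ => hterm j), Finset.sum_sub_distrib,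
        Finset.sum_ite_eq' Finset.univ i (fun _ => x i), if_pos (Finset.mem_univ i)] at hme
      rw [hSx]
      linarith [hme]
    have hSxpos : 0 < Sx := by
      have h1 : x i0 ≤ Sx := Finset.single_le_sum (fun j _ => hx j) (Finset.mem_univ i0)
      have h2 : 0 < x i0 := (hx i0).lt_of_ne' (by simpa using hi0)
      linarith
    have hFsum : ∑ i ∈ F, x i = Sx := by
      rw [hSx]
      refine Finset.sum_subset (Finset.filter_subset _ _) fun i _ hni => ?_
      by_contra hxi
      exact hni ((hFmem i).mpr hxi)
    have hsum2 : (F.card : ℝ) * Sx - Sx = A * Sx := by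
      have e1 : ∑ i ∈ F, (Sx - x i) = ∑ i ∈ F, A * x i :=
        Finset.sum_congr rfl fun i hi => hrow i hi
      rw [Finset.sum_sub_distrib, Finset.sum_const, ← Finset.mul_sum, hFsum, nsmul_eq_mul] at e1
      linarith [e1]
    have hAcard : (F.card : ℝ) = A + 1 := by
      have h' : (F.card : ℝ) * Sx = (A + 1) * Sx := by linarith [hsum2]
      exact mul_right_cancel₀ (ne_of_gt hSxpos) h'
    have hb1 : (9:ℝ) < 2 * (F.card : ℝ) := by rw [hAcard, hAdef]; linarith
    have hb2 : (2:ℝ) * (F.card : ℝ) < 10 := by rw [hAcard, hAdef]; linarith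
    have hb1' : 9 < 2 * F.card := by exact_mod_cast hb1
    have hb2' : 2 * F.card < 10 := by exact_mod_cast hb2
    omega
  obtain ⟨u0, w0, hu0w0⟩ := hex2
  have hu0ne : u0 ≠ w0 := by intro h; rw [h, SimpleGraph.dist_self] at hu0w0; omega
  have hmid : ∀ u w : Fin n, G.dist u w = 2 →
      ∃ v, G.dist u v = 1 ∧ G.dist v w = 1 ∧ u ≠ v ∧ v ≠ w ∧ u ≠ w := by
    intro u w huw
    obtain ⟨v, hadj, hv⟩ := p17_penult hG (show G.dist u w = 1 + 1 from huw)
    refine ⟨v, SimpleGraph.dist_eq_one_iff_adj.mpr hadj, hv, hadj.ne, ?_, ?_⟩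
    · intro h; rw [h, SimpleGraph.dist_self] at hv; omega
    · intro h; rw [h, SimpleGraph.dist_self] at huw; omega
  have hmem0 : (0:ℝ) ∈ distParetoSet G := p17_mem1 G ⟨0, by omega⟩
  have hmem1 : (1:ℝ) ∈ distParetoSet G := by
    obtain ⟨a, b, hab⟩ := p17_realize hG 2 1 u0 w0 hu0w0 (by omega)
    have hne : a ≠ b := by intro h; rw [h, SimpleGraph.dist_self] at hab; omega
    have := p17_mem2 G hne
    rw [hab] at this
    exact_mod_cast this
  have hmem2 : (2:ℝ) ∈ distParetoSet G := by
    have := p17_mem2 G hu0ne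
    rw [hu0w0] at this
    exact_mod_cast this
  have hmem112 : (1 + Real.sqrt 3) ∈ distParetoSet G := by
    obtain ⟨v, d1, d2, huv, hvw, huw'⟩ := hmid u0 w0 hu0w0
    have c1 : (G.dist u0 v : ℝ) = 1 := by exact_mod_cast d1
    have c2 : (G.dist v w0 : ℝ) = 1 := by exact_mod_cast d2
    have c3 : (G.dist u0 w0 : ℝ) = 2 := by exact_mod_cast hu0w0
    refine p17_mem3 G huv huw' hvw (ca := 1) (cb := Real.sqrt 3 - 1) (cc := 1)
      (by norm_num) (by linarith) (by norm_num) (by linarith) ?_ ?_ ?_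
    · rw [c1, c3]; ring
    · rw [c1, c2]; linear_combination -h3
    · rw [c3, c2]; ring
  -- Step B : the diameter is at most 2
  have hdiam : ∀ i j : Fin n, i ≠ j → G.dist i j = 1 ∨ G.dist i j = 2 := by
    by_contra hcon
    push_neg at hcon
    obtain ⟨i, j, hij, hn1, hn2⟩ := hcon
    have h3' : 3 ≤ G.dist i j := by
      have := hG.pos_dist_of_ne hij; omega
    obtain ⟨a3, b3, hd3⟩ := p17_realize hG (G.dist i j) 3 i j rfl h3'
    have hne3 : a3 ≠ b3 := by intro h; rw [h, SimpleGraph.dist_self] at hd3; omega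
    have hmem3 : (3:ℝ) ∈ distParetoSet G := by
      have := p17_mem2 G hne3; rw [hd3] at this; exact_mod_cast this
    set T5 : Set ℝ := insert 0 (insert 1 (insert 2 (insert (1+Real.sqrt 3) {3}))) with hT5
    have hsub : T5 ⊆ S' := by
      rw [hT5, hS'def]
      intro t ht
      simp only [Set.mem_insert_iff, Set.mem_singleton_iff] at ht
      rcases ht with rfl | rfl | rfl | rfl | rfl
      · exact ⟨hmem0, by rw [hAdef]; linarith⟩
      · exact ⟨hmem1, by rw [hAdef]; linarith⟩
      · exact ⟨hmem2, by rw [hAdef]; linarith⟩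
      · exact ⟨hmem112, by rw [hAdef]; linarith⟩
      · exact ⟨hmem3, by rw [hAdef]; linarith⟩
    have e0 : (1 + Real.sqrt 3) ∉ ({3} : Set ℝ) := by
      simp only [Set.mem_singleton_iff]; intro h; linarith
    have e1 : (2:ℝ) ∉ insert (1+Real.sqrt 3) ({3} : Set ℝ) := by
      simp only [Set.mem_insert_iff, Set.mem_singleton_iff]
      push_neg
      exact ⟨by intro h; linarith, by norm_num⟩
    have e2 : (1:ℝ) ∉ insert 2 (insert (1+Real.sqrt 3) ({3} : Set ℝ)) := by
      simp only [Set.mem_insert_iff, Set.mem_singleton_iff]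
      push_neg
      exact ⟨by norm_num, by intro h; linarith, by norm_num⟩
    have e3 : (0:ℝ) ∉ insert 1 (insert 2 (insert (1+Real.sqrt 3) ({3} : Set ℝ))) := by
      simp only [Set.mem_insert_iff, Set.mem_singleton_iff]
      push_neg
      exact ⟨by norm_num, by norm_num, by intro h; linarith, by norm_num⟩
    have hT5card : T5.ncard = 5 := by
      rw [hT5, Set.ncard_insert_of_notMem e3, Set.ncard_insert_of_notMem e2,
        Set.ncard_insert_of_notMem e1, Set.ncard_insert_of_notMem e0, Set.ncard_singleton]
    have hle := Set.ncard_le_ncard hsub hfin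
    rw [hT5card, hcard4] at hle
    omega
  -- Step C : S' = {0, 1, 2, 1+sqrt 3}
  have hS'T : S' = insert 0 (insert 1 (insert 2 ({1+Real.sqrt 3} : Set ℝ))) := by
    refine (Set.eq_of_subset_of_ncard_le ?_ ?_ hfin).symm
    · intro t ht
      rw [hS'def]
      simp only [Set.mem_insert_iff, Set.mem_singleton_iff] at ht
      rcases ht with rfl | rfl | rfl | rfl
      · exact ⟨hmem0, by rw [hAdef]; linarith⟩
      · exact ⟨hmem1, by rw [hAdef]; linarith⟩
      · exact ⟨hmem2, by rw [hAdef]; linarith⟩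
      · exact ⟨hmem112, by rw [hAdef]; linarith⟩
    · have f0 : (1 + Real.sqrt 3) ∉ (∅ : Set ℝ) := Set.notMem_empty _
      have f1 : (2:ℝ) ∉ ({1+Real.sqrt 3} : Set ℝ) := by
        simp only [Set.mem_singleton_iff]; intro h; linarith
      have f2 : (1:ℝ) ∉ insert 2 ({1+Real.sqrt 3} : Set ℝ) := by
        simp only [Set.mem_insert_iff, Set.mem_singleton_iff]
        push_neg
        exact ⟨by norm_num, by intro h; linarith⟩
      have f3 : (0:ℝ) ∉ insert 1 (insert 2 ({1+Real.sqrt 3} : Set ℝ)) := by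
        simp only [Set.mem_insert_iff, Set.mem_singleton_iff]
        push_neg
        exact ⟨by norm_num, by norm_num, by intro h; linarith⟩
      rw [hcard4, Set.ncard_insert_of_notMem f3, Set.ncard_insert_of_notMem f2,
        Set.ncard_insert_of_notMem f1, Set.ncard_singleton]
  have hnotinS : ∀ t : ℝ, t ∈ distParetoSet G → t < A →
      t = 0 ∨ t = 1 ∨ t = 2 ∨ t = 1 + Real.sqrt 3 := by
    intro t ht htA
    have : t ∈ S' := by rw [hS'def]; exact ⟨ht, htA⟩
    rw [hS'T] at this
    simpa [Set.mem_insert_iff, Set.mem_singleton_iff] using this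
  -- no (1,2,2) triple
  have no122 : ∀ a b c : Fin n, a ≠ b → a ≠ c → b ≠ c →
      G.dist a b = 1 → G.dist a c = 2 → G.dist b c = 2 → False := by
    intro a b c hab hac hbc dab dac dbc
    have c1 : (G.dist a b : ℝ) = 1 := by exact_mod_cast dab
    have c2 : (G.dist a c : ℝ) = 2 := by exact_mod_cast dac
    have c3 : (G.dist b c : ℝ) = 2 := by exact_mod_cast dbc
    have hmm : ((1 + Real.sqrt 33)/2) ∈ distParetoSet G := by
      refine p17_mem3 G hab hac hbc (ca := 1) (cb := 1) (cc := (Real.sqrt 33 - 1)/4)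
        (by norm_num) (by norm_num) (by linarith) (by linarith) ?_ ?_ ?_
      · rw [c1, c2]; ring
      · rw [c1, c3]; ring
      · rw [c2, c3]; linear_combination (-(1:ℝ)/8) * h33
    have hlt : (1 + Real.sqrt 33)/2 < A := by
      rw [hAdef]
      nlinarith [h17, h33, Real.sqrt_nonneg 17, Real.sqrt_nonneg 33]
    rcases hnotinS _ hmm hlt with h | h | h | h
    · linarith
    · linarith
    · linarith
    · linarith
  -- no all-ones 4-subset
  have noK4 : ∀ a b c d : Fin n, a ≠ b → a ≠ c → a ≠ d → b ≠ c → b ≠ d → c ≠ d →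
      G.dist a b = 1 → G.dist a c = 1 → G.dist a d = 1 →
      G.dist b c = 1 → G.dist b d = 1 → G.dist c d = 1 → False := by
    intro a b c d hab hac had hbc hbd hcd dab dac dad dbc dbd dcd
    have c1 : (G.dist a b : ℝ) = 1 := by exact_mod_cast dab
    have c2 : (G.dist a c : ℝ) = 1 := by exact_mod_cast dac
    have c3 : (G.dist a d : ℝ) = 1 := by exact_mod_cast dad
    have c4 : (G.dist b c : ℝ) = 1 := by exact_mod_cast dbc
    have c5 : (G.dist b d : ℝ) = 1 := by exact_mod_cast dbd
    have c6 : (G.dist c d : ℝ) = 1 := by exact_mod_cast dcd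
    have hmm : (3:ℝ) ∈ distParetoSet G := by
      refine p17_mem4 G hab hac had hbc hbd hcd
        (ca := 1) (cb := 1) (cc := 1) (cd' := 1)
        (by norm_num) (by norm_num) (by norm_num) (by norm_num) (by norm_num) ?_ ?_ ?_ ?_
      · rw [c1, c2, c3]; ring
      · rw [c1, c4, c5]; ring
      · rw [c2, c4, c6]; ring
      · rw [c3, c5, c6]; ring
    have hlt : (3:ℝ) < A := by rw [hAdef]; linarith
    rcases hnotinS _ hmm hlt with h | h | h | h
    · linarith
    · linarith
    · linarith
    · linarith
  -- 4 is a distance Pareto eigenvalue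
  have hmem4R : (4:ℝ) ∈ distParetoSet G := by
    by_cases htri : ∃ a b c : Fin n, a ≠ b ∧ a ≠ c ∧ b ≠ c ∧
        G.dist a b = 2 ∧ G.dist a c = 2 ∧ G.dist b c = 2
    · obtain ⟨a, b, c, hab, hac, hbc, dab, dac, dbc⟩ := htri
      have c1 : (G.dist a b : ℝ) = 2 := by exact_mod_cast dab
      have c2 : (G.dist a c : ℝ) = 2 := by exact_mod_cast dac
      have c3 : (G.dist b c : ℝ) = 2 := by exact_mod_cast dbc
      refine p17_mem3 G hab hac hbc (ca := 1) (cb := 1) (cc := 1)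
        (by norm_num) (by norm_num) (by norm_num) (by norm_num) ?_ ?_ ?_
      · rw [c1, c2]; ring
      · rw [c1, c3]; ring
      · rw [c2, c3]; ring
    · push_neg at htri
      have hcross : ∀ z : Fin n, z ≠ u0 → z ≠ w0 → G.dist u0 z = 1 ∧ G.dist w0 z = 1 := by
        intro z hz1 hz2
        have d1 : G.dist u0 z = 1 := by
          rcases hdiam u0 z (Ne.symm hz1) with h | h
          · exact h
          · exfalso
            rcases hdiam w0 z (Ne.symm hz2) with h' | h'
            · exact no122 z w0 u0 hz2 hz1 (Ne.symm hu0ne)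
                (by rw [SimpleGraph.dist_comm]; exact h')
                (by rw [SimpleGraph.dist_comm]; exact h)
                (by rw [SimpleGraph.dist_comm]; exact hu0w0)
            · exact htri u0 w0 z hu0ne (Ne.symm hz1) (Ne.symm hz2) hu0w0 h h'
        have d2 : G.dist w0 z = 1 := by
          rcases hdiam w0 z (Ne.symm hz2) with h | h
          · exact h
          · exfalso
            exact no122 z u0 w0 hz1 hz2 hu0ne
              (by rw [SimpleGraph.dist_comm]; exact d1)
              (by rw [SimpleGraph.dist_comm]; exact h)
              hu0w0
        exact ⟨d1, d2⟩
      by_cases hsec : ∃ c d : Fin n, c ≠ d ∧ c ≠ u0 ∧ c ≠ w0 ∧ d ≠ u0 ∧ d ≠ w0 ∧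
          G.dist c d = 2
      · obtain ⟨c, d, hcd, hcu, hcw, hdu, hdw, dcd⟩ := hsec
        obtain ⟨hc1, hc2⟩ := hcross c hcu hcw
        obtain ⟨hd1, hd2⟩ := hcross d hdu hdw
        have c1 : (G.dist u0 w0 : ℝ) = 2 := by exact_mod_cast hu0w0
        have c2 : (G.dist u0 c : ℝ) = 1 := by exact_mod_cast hc1
        have c3 : (G.dist u0 d : ℝ) = 1 := by exact_mod_cast hd1
        have c4 : (G.dist w0 c : ℝ) = 1 := by exact_mod_cast hc2
        have c5 : (G.dist w0 d : ℝ) = 1 := by exact_mod_cast hd2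
        have c6 : (G.dist c d : ℝ) = 2 := by exact_mod_cast dcd
        refine p17_mem4 G hu0ne (Ne.symm hcu) (Ne.symm hdu) (Ne.symm hcw) (Ne.symm hdw) hcd
          (ca := 1) (cb := 1) (cc := 1) (cd' := 1)
          (by norm_num) (by norm_num) (by norm_num) (by norm_num) (by norm_num) ?_ ?_ ?_ ?_
        · rw [c1, c2, c3]; ring
        · rw [c1, c4, c5]; ring
        · rw [c2, c4, c6]; ring
        · rw [c3, c5, c6]; ring
      · exfalso
        push_neg at hsec
        -- find three vertices distinct from u0, w0; they form a K4 with u0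
        have hUcard : 3 ≤ (Finset.univ \ {u0, w0} : Finset (Fin n)).card := by
          have h1 : ({u0, w0} : Finset (Fin n)).card ≤ 2 := Finset.card_insert_le _ _ |>.trans (by simp)
          have h2 := Finset.card_sdiff_of_subset (Finset.subset_univ ({u0, w0} : Finset (Fin n)))
          rw [Finset.card_univ, Fintype.card_fin] at h2
          omega
        obtain ⟨U3, hU3sub, hU3card⟩ := Finset.exists_subset_card_eq hUcard
        obtain ⟨z1, z2, z3, h12, h13, h23, hU3eq⟩ := Finset.card_eq_three.mp hU3card
        have hzout : ∀ z ∈ U3, z ≠ u0 ∧ z ≠ w0 := by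
          intro z hz
          have := hU3sub hz
          rw [Finset.mem_sdiff] at this
          have h' := this.2
          simp only [Finset.mem_insert, Finset.mem_singleton] at h'
          push_neg at h'
          exact h'
        have hz1 := hzout z1 (by rw [hU3eq]; simp)
        have hz2 := hzout z2 (by rw [hU3eq]; simp)
        have hz3 := hzout z3 (by rw [hU3eq]; simp)
        have hzz : ∀ y z : Fin n, y ≠ z → y ≠ u0 → y ≠ w0 → z ≠ u0 → z ≠ w0 →
            G.dist y z = 1 := by
          intro y z hyz hy1 hy2 hz1' hz2'
          rcases hdiam y z hyz with h | h
          · exact h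
          · exact absurd h (hsec y z hyz hy1 hy2 hz1' hz2')
        exact noK4 u0 z1 z2 z3 (Ne.symm hz1.1) (Ne.symm hz2.1) (Ne.symm hz3.1) h12 h13 h23
          (hcross z1 hz1.1 hz1.2).1 (hcross z2 hz2.1 hz2.2).1 (hcross z3 hz3.1 hz3.2).1
          (hzz z1 z2 h12 hz1.1 hz1.2 hz2.1 hz2.2)
          (hzz z1 z3 h13 hz1.1 hz1.2 hz3.1 hz3.2)
          (hzz z2 z3 h23 hz2.1 hz2.2 hz3.1 hz3.2)
  have hgap : ∀ lam : ℝ, lam ∈ distParetoSet G → A < lam → lam < 4 → False := by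
    intro lam hlamP hgt hlt
    have hA3 : (3:ℝ) < A := by rw [hAdef]; linarith
    obtain ⟨x, hp⟩ := hlamP
    obtain ⟨heq, hlamnn, hnum, hxx⟩ := p17_elim (p17_dm_nn G) hp
    have hx : ∀ i, 0 ≤ x i := hp.2.1
    set F := Finset.univ.filter (fun i => x i ≠ 0) with hFdef
    have hFmem : ∀ i, i ∈ F ↔ x i ≠ 0 := by intro i; simp [hFdef]
    obtain ⟨i0, hi0⟩ := Function.ne_iff.mp hp.1
    have hi0' : x i0 ≠ 0 := by simpa using hi0
    have hFne : i0 ∈ F := (hFmem i0).mpr hi0'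
    rcases Nat.lt_or_ge F.card 5 with hsm | hbig
    · have hcpos : 1 ≤ F.card := Finset.card_pos.mpr ⟨i0, hFne⟩
      rcases (show F.card = 1 ∨ F.card = 2 ∨ F.card = 3 ∨ F.card = 4 by omega)
        with hc | hc | hc | hc
      · obtain ⟨a, hFa⟩ := Finset.card_eq_one.mp hc
        have hxa : x a ≠ 0 := (hFmem a).mp (by rw [hFa]; simp)
        have hzero : (distMatrix G).mulVec x a = 0 := by
          rw [p17_mv]
          refine Finset.sum_eq_zero fun j _ => ?_
          rcases eq_or_ne j a with h | h
          · subst h; rw [p17_dm_self]; ring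
          · have hxj : x j = 0 := by
              by_contra hxj
              have hjF : j ∈ F := (hFmem j).mpr hxj
              rw [hFa, Finset.mem_singleton] at hjF
              exact h hjF
            rw [hxj, mul_zero]
        have h0 := heq a hxa
        rw [hzero] at h0
        rcases mul_eq_zero.mp h0.symm with h | h
        · linarith
        · exact hxa h
      · obtain ⟨a, b, hab, hFab⟩ := Finset.card_eq_two.mp hc
        have hsupp : ∀ i, x i ≠ 0 → i = a ∨ i = b := by
          intro i hxi
          have : i ∈ F := (hFmem i).mpr hxi
          rw [hFab] at this
          simpa using this
        have hd2 : G.dist a b ≤ 2 := by rcases hdiam a b hab with h | h <;> omega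
        have := p17_upper_pair hp hab hsupp hd2
        linarith
      · obtain ⟨a, b, c, hab, hac, hbc, hFeq⟩ := Finset.card_eq_three.mp hc
        have hsupp : ∀ i, x i ≠ 0 → i = a ∨ i = b ∨ i = c := by
          intro i hxi
          have : i ∈ F := (hFmem i).mpr hxi
          rw [hFeq] at this; simpa using this
        have h1p3 : 1 + Real.sqrt 3 < A := by rw [hAdef]; linarith
        rcases hdiam a b hab with dab | dab <;> rcases hdiam a c hac with dac | dac <;>
          rcases hdiam b c hbc with dbc | dbc
        · have := p17_upper_triple hp hab hac hbc hsupp (by omega) dac dbc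
          linarith
        · have := p17_upper_triple hp (a := b) (b := c) (m := a) hbc (Ne.symm hab)
            (Ne.symm hac)
            (fun i hxi => by
              rcases hsupp i hxi with h | h | h
              exacts [Or.inr (Or.inr h), Or.inl h, Or.inr (Or.inl h)])
            (by omega) (by rw [SimpleGraph.dist_comm]; exact dab)
            (by rw [SimpleGraph.dist_comm]; exact dac)
          linarith
        · have := p17_upper_triple hp (a := a) (b := c) (m := b) hac hab (Ne.symm hbc)
            (fun i hxi => by
              rcases hsupp i hxi with h | h | h
              exacts [Or.inl h, Or.inr (Or.inr h), Or.inr (Or.inl h)])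
            (by omega) dab (by rw [SimpleGraph.dist_comm]; exact dbc)
          linarith
        · exact no122 a b c hab hac hbc dab dac dbc
        · have := p17_upper_triple hp hab hac hbc hsupp (by omega) dac dbc
          linarith
        · exact no122 a c b hac hab (Ne.symm hbc) dac dab
            (by rw [SimpleGraph.dist_comm]; exact dbc)
        · exact no122 b c a hbc (Ne.symm hab) (Ne.symm hac) dbc
            (by rw [SimpleGraph.dist_comm]; exact dab)
            (by rw [SimpleGraph.dist_comm]; exact dac)
        · have hsum3 : ∀ f : Fin n → ℝ, ∑ i ∈ F, f i = f a + f b + f c := by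
            intro f
            rw [hFeq, Finset.sum_insert (by simp [hab, hac]),
              Finset.sum_insert (by simp [hbc]), Finset.sum_singleton, add_assoc]
          have hlow := p17_lower hp F (fun i hi => (hFmem i).mp hi)
          have hc3 : (F.card : ℝ) = 3 := by rw [hc]; norm_num
          have hval : ∑ i ∈ F, ∑ j ∈ F, (G.dist i j : ℝ) = 12 := by
            rw [hsum3 (fun i => ∑ j ∈ F, (G.dist i j : ℝ))]
            rw [hsum3 (fun j => (G.dist a j : ℝ)), hsum3 (fun j => (G.dist b j : ℝ)),
               hsum3 (fun j => (G.dist c j : ℝ))]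
            rw [show G.dist b a = G.dist a b from SimpleGraph.dist_comm,
              show G.dist c a = G.dist a c from SimpleGraph.dist_comm,
              show G.dist c b = G.dist b c from SimpleGraph.dist_comm,
              SimpleGraph.dist_self, SimpleGraph.dist_self, SimpleGraph.dist_self,
              dab, dac, dbc]
            norm_num
          rw [hval, hc3] at hlow
          linarith
      · -- card 4
        have hc' : F.card = 3 + 1 := by omega
        obtain ⟨a, Frest, haF, hFins, hFrest3⟩ := Finset.card_eq_succ.mp hc'
        by_cases h2p : ∃ p q r' s' : Fin n, p ∈ F ∧ q ∈ F ∧ r' ∈ F ∧ s' ∈ F ∧ p ≠ q ∧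
            r' ≠ s' ∧ ¬(p = r' ∧ q = s') ∧ ¬(p = s' ∧ q = r') ∧ G.dist p q = 2 ∧
            G.dist r' s' = 2
        · obtain ⟨p, q, r', s', hpF, hqF, hrF, hsF, hpq, hrs, hnd1, hnd2, dpq, drs⟩ := h2p
          have hlow := p17_lower hp F (fun i hi => (hFmem i).mp hi)
          have h2s := p17_sum_2pairs hG hpF hqF hrF hsF hpq hrs hnd1 hnd2 dpq drs
          have hc4 : (F.card : ℝ) = 4 := by rw [hc]; norm_num
          rw [hc4] at hlow h2s
          linarith
        · push_neg at h2p
          by_cases hone : ∃ p q : Fin n, p ∈ F ∧ q ∈ F ∧ p ≠ q ∧ G.dist p q = 2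
          · obtain ⟨p, q, hpF, hqF, hpq, dpq⟩ := hone
            have hkey : ∀ i j, i ∈ F → j ∈ F → i ≠ j →
                ¬((i = p ∧ j = q) ∨ (i = q ∧ j = p)) → G.dist i j = 1 := by
              intro i j hiF hjF hij hnot
              rcases hdiam i j hij with h | h
              · exact h
              · exfalso
                refine h2p p q i j hpF hqF hiF hjF hpq hij ?_ ?_ dpq h
                · intro e1 e2; exact hnot (Or.inl ⟨e1.symm, e2.symm⟩)
                · intro e1 e2; exact hnot (Or.inr ⟨e2.symm, e1.symm⟩)
            have hsubpq : ({p, q} : Finset (Fin n)) ⊆ F := by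
              intro i hi
              simp only [Finset.mem_insert, Finset.mem_singleton] at hi
              rcases hi with rfl | rfl <;> assumption
            have hR2 : (F \ {p, q}).card = 2 := by
              rw [Finset.card_sdiff_of_subset hsubpq, hc]
              rw [Finset.card_insert_of_notMem (by simp [hpq]), Finset.card_singleton]
            obtain ⟨r', s', hrs, hReq⟩ := Finset.card_eq_two.mp hR2
            have hrmem : r' ∈ F \ ({p, q} : Finset (Fin n)) := by rw [hReq]; simp
            have hsmem : s' ∈ F \ ({p, q} : Finset (Fin n)) := by rw [hReq]; simp
            rw [Finset.mem_sdiff] at hrmem hsmem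
            have hrF : r' ∈ F := hrmem.1
            have hsF : s' ∈ F := hsmem.1
            have hrp : r' ≠ p := by
              intro h; exact hrmem.2 (by rw [h]; simp)
            have hrq : r' ≠ q := by
              intro h; exact hrmem.2 (by rw [h]; simp)
            have hsp : s' ≠ p := by
              intro h; exact hsmem.2 (by rw [h]; simp)
            have hsq : s' ≠ q := by
              intro h; exact hsmem.2 (by rw [h]; simp)
            have hsupp4 : ∀ i, x i ≠ 0 → i = p ∨ i = q ∨ i = r' ∨ i = s' := by
              intro i hxi
              have hiF : i ∈ F := (hFmem i).mpr hxi
              by_cases hip : i = p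
              · exact Or.inl hip
              by_cases hiq : i = q
              · exact Or.inr (Or.inl hiq)
              have : i ∈ F \ ({p, q} : Finset (Fin n)) :=
                Finset.mem_sdiff.mpr ⟨hiF, by simp [hip, hiq]⟩
              rw [hReq] at this
              simp only [Finset.mem_insert, Finset.mem_singleton] at this
              rcases this with h | h
              · exact Or.inr (Or.inr (Or.inl h))
              · exact Or.inr (Or.inr (Or.inr h))
            have dpr : G.dist p r' = 1 := hkey p r' hpF hrF (Ne.symm hrp)
              (by rintro (⟨-, e⟩ | ⟨e, -⟩); exacts [hrq e, hpq e])
            have dps : G.dist p s' = 1 := hkey p s' hpF hsF (Ne.symm hsp)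
              (by rintro (⟨-, e⟩ | ⟨e, -⟩); exacts [hsq e, hpq e])
            have dqr : G.dist q r' = 1 := hkey q r' hqF hrF (Ne.symm hrq)
              (by rintro (⟨e, -⟩ | ⟨-, e⟩); exacts [hpq e.symm, hrp e])
            have dqs : G.dist q s' = 1 := hkey q s' hqF hsF (Ne.symm hsq)
              (by rintro (⟨e, -⟩ | ⟨-, e⟩); exacts [hpq e.symm, hsp e])
            have drs' : G.dist r' s' = 1 := hkey r' s' hrF hsF hrs
              (by rintro (⟨e, -⟩ | ⟨e, -⟩); exacts [hrp e, hrq e])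
            have := p17_upper_quad hp hpq (Ne.symm hrp) (Ne.symm hsp) (Ne.symm hrq)
              (Ne.symm hsq) hrs hsupp4 (by omega) dpr dps dqr dqs drs'
            linarith
          · push_neg at hone
            have hall : ∀ i j, i ∈ F → j ∈ F → i ≠ j → G.dist i j = 1 := by
              intro i j hiF hjF hij
              rcases hdiam i j hij with h | h
              · exact h
              · exact absurd h (hone i j hiF hjF hij)
            obtain ⟨b, c, d, hbc, hbd, hcd, hresteq⟩ := Finset.card_eq_three.mp hFrest3
            have hFeq4 : F = {a, b, c, d} := by rw [← hFins, hresteq]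
            have hab : a ≠ b := by
              intro h; apply haF; rw [hresteq, h]; simp
            have hac : a ≠ c := by
              intro h; apply haF; rw [hresteq, h]; simp
            have had : a ≠ d := by
              intro h; apply haF; rw [hresteq, h]; simp
            have haF' : a ∈ F := by rw [hFeq4]; simp
            have hbF : b ∈ F := by rw [hFeq4]; simp
            have hcF : c ∈ F := by rw [hFeq4]; simp
            have hdF : d ∈ F := by rw [hFeq4]; simp
            have hsupp4 : ∀ i, x i ≠ 0 → i = a ∨ i = b ∨ i = c ∨ i = d := by
              intro i hxi
              have hiF : i ∈ F := (hFmem i).mpr hxi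
              rw [hFeq4] at hiF
              simpa using hiF
            have := p17_upper_quad hp hab hac had hbc hbd hcd hsupp4
              (by rw [hall a b haF' hbF hab]; omega)
              (hall a c haF' hcF hac) (hall a d haF' hdF had)
              (hall b c hbF hcF hbc) (hall b d hbF hdF hbd)
              (hall c d hcF hdF hcd)
            linarith
    · have hlow := p17_lower hp F (fun i hi => (hFmem i).mp hi)
      have hge := p17_sum_ge hG F
      have hc5 : (5:ℝ) ≤ (F.card : ℝ) := by exact_mod_cast hbig
      have hcomb : (F.card : ℝ) * ((F.card : ℝ) - 1) ≤ lam * F.card := le_trans hge hlow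
      nlinarith [hcomb, hc5, hlt]
  -- final assembly
  have hA4 : A < 4 := by rw [hAdef]; linarith
  constructor
  · exact hmem4R
  · have hseteq : {x | x ∈ distParetoSet G ∧ x < 4} = insert A S' := by
      ext t
      simp only [Set.mem_setOf_eq, Set.mem_insert_iff]
      constructor
      · rintro ⟨htP, ht4⟩
        rcases lt_trichotomy t A with h | h | h
        · exact Or.inr (by rw [hS'def]; exact ⟨htP, h⟩)
        · exact Or.inl h
        · exact (hgap t htP h ht4).elim
      · rintro (rfl | ht)
        · exact ⟨hmemA, hA4⟩
        · rw [hS'def] at ht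
          exact ⟨ht.1, lt_trans ht.2 hA4⟩
      
    have hAnotin : A ∉ S' := by
      rw [hS'def]
      intro h
      exact lt_irrefl A h.2
    show Set.ncard {x | x ∈ distParetoSet G ∧ x < 4} = 6 - 1
    rw [hseteq, Set.ncard_insert_of_notMem hAnotin hfin, hcard4]
end
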